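/- arXiv:2310.00502 — 13 statements merged into one kernel-verified Lean document; each statement's English description precedes it below -/
import Mathlib

section
/- Let F : C → D be a semifunctor and suppose F ⊣ₛ G and F ⊣ₛ G' are two semiadjunctions, with units η, η' and counits ε, ε' respectively. Then G and G' are naturally semi-isomorphic; explicitly, γ with components γ_D = G'(ε_D) ∘ η'_{GD} and γ' with components γ'_D = G(ε'_D) ∘ η_{G'D} are seminatural transformations satisfying γ' ∘ γ = G(Id) and γ ∘ γ' = G'(Id) componentwise. -/
open CategoryTheory

universe v₁ v₂ v₃ v₄ u₁ u₂ u₃ u₄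

/-- A semifunctor between categories: it preserves composition of morphisms
but not necessarily identities. -/
structure Semifunctor (C : Type u₁) (D : Type u₂) [Category.{v₁} C] [Category.{v₂} D] where
  obj : C → D
  map : ∀ {X Y : C}, (X ⟶ Y) → (obj X ⟶ obj Y)
  map_comp : ∀ {X Y Z : C} (f : X ⟶ Y) (g : Y ⟶ Z), map (f ≫ g) = map f ≫ map g

namespace Semifunctor

variable {C : Type u₁} {D : Type u₂} {E : Type u₃} {C' : Type u₄}
variable [Category.{v₁} C] [Category.{v₂} D] [Category.{v₃} E] [Category.{v₄} C']

/-- Composition of semifunctors, in diagrammatic order: `F.comp G = G ∘ F`. -/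
def comp (F : Semifunctor C D) (G : Semifunctor D E) : Semifunctor C E where
  obj X := G.obj (F.obj X)
  map f := G.map (F.map f)
  map_comp f g := by
    show G.map (F.map (f ≫ g)) = G.map (F.map f) ≫ G.map (F.map g)
    rw [F.map_comp, G.map_comp]

/-- `α` is a natural transformation between the semifunctors `F` and `F'`:
`α_Y ∘ F(f) = F'(f) ∘ α_X` for every `f : X ⟶ Y`. -/
def IsNatural {F F' : Semifunctor C D} (α : ∀ X : C, F.obj X ⟶ F'.obj X) : Prop :=
  ∀ ⦃X Y : C⦄ (f : X ⟶ Y), F.map f ≫ α Y = α X ≫ F'.map f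

/-- `α` is a seminatural transformation: natural and `α_X ∘ F(Id_X) = α_X`. -/
def IsSeminatural {F F' : Semifunctor C D} (α : ∀ X : C, F.obj X ⟶ F'.obj X) : Prop :=
  IsNatural α ∧ ∀ X : C, F.map (𝟙 X) ≫ α X = α X

/-- A semifunctor is faithful if all its hom-maps are injective. -/
def Faithful (F : Semifunctor C D) : Prop :=
  ∀ ⦃X Y : C⦄ (f g : X ⟶ Y), F.map f = F.map g → f = g

/-- A semifunctor is full if all its hom-maps are surjective. -/
def Full (F : Semifunctor C D) : Prop :=
  ∀ ⦃X Y : C⦄ (g : F.obj X ⟶ F.obj Y), ∃ f : X ⟶ Y, F.map f = g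

/-- A semifunctor is semifull if for every `f : FX ⟶ FY` there is `g : X ⟶ Y`
with `F(g) = F(Id_Y) ∘ f ∘ F(Id_X)`. -/
def Semifull (F : Semifunctor C D) : Prop :=
  ∀ ⦃X Y : C⦄ (f : F.obj X ⟶ F.obj Y), ∃ g : X ⟶ Y,
    F.map g = F.map (𝟙 X) ≫ f ≫ F.map (𝟙 Y)

/-- A semifunctor is semifully faithful if it is faithful and semifull. -/
def SemifullyFaithful (F : Semifunctor C D) : Prop :=
  F.Faithful ∧ F.Semifull

/-- `P` is a natural transformation `Hom_D(F-,F-) → Hom_C(-,-)`. -/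
def IsHomNatural (F : Semifunctor C D)
    (P : ∀ X Y : C, (F.obj X ⟶ F.obj Y) → (X ⟶ Y)) : Prop :=
  ∀ (X Y Z T : C) (h : X ⟶ Y) (k : F.obj Y ⟶ F.obj Z) (l : Z ⟶ T),
    P X T (F.map h ≫ k ≫ F.map l) = h ≫ P Y Z k ≫ l

/-- A semifunctor is separable if the associated natural transformation `ℱ` has a
natural retraction `P` : `P(F(f)) = f`. -/
def Separable (F : Semifunctor C D) : Prop :=
  ∃ P : ∀ X Y : C, (F.obj X ⟶ F.obj Y) → (X ⟶ Y),
    F.IsHomNatural P ∧ ∀ (X Y : C) (f : X ⟶ Y), P X Y (F.map f) = f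

/-- A semifunctor is naturally semifull if there is a natural `P` with
`F(P(f)) = F(Id_Y) ∘ f ∘ F(Id_X)` for all `f : FX ⟶ FY`. -/
def NaturallySemifull (F : Semifunctor C D) : Prop :=
  ∃ P : ∀ X Y : C, (F.obj X ⟶ F.obj Y) → (X ⟶ Y),
    F.IsHomNatural P ∧
    ∀ (X Y : C) (f : F.obj X ⟶ F.obj Y),
      F.map (P X Y f) = F.map (𝟙 X) ≫ f ≫ F.map (𝟙 Y)

/-- A semifunctor is semiseparable if there is a natural `P` with
`F(P(F(f))) = F(f)` for all `f : X ⟶ Y`. -/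
def Semiseparable (F : Semifunctor C D) : Prop :=
  ∃ P : ∀ X Y : C, (F.obj X ⟶ F.obj Y) → (X ⟶ Y),
    F.IsHomNatural P ∧
    ∀ (X Y : C) (f : X ⟶ Y), F.map (P X Y (F.map f)) = F.map f

/-- `f : FC ⟶ F'C'` is an `(F_C, F'_{C'})`-semisplit-mono. -/
def IsSemisplitMonoAt (F : Semifunctor C D) (F' : Semifunctor C' D) (c : C) (c' : C')
    (f : F.obj c ⟶ F'.obj c') : Prop :=
  F.map (𝟙 c) ≫ f = f ∧ ∃ g : F'.obj c' ⟶ F.obj c,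
    f ≫ g = F.map (𝟙 c) ∧ F'.map (𝟙 c') ≫ g = g

/-- `f : FC ⟶ F'C'` is an `(F_C, F'_{C'})`-semisplit-epi. -/
def IsSemisplitEpiAt (F : Semifunctor C D) (F' : Semifunctor C' D) (c : C) (c' : C')
    (f : F.obj c ⟶ F'.obj c') : Prop :=
  f ≫ F'.map (𝟙 c') = f ∧ ∃ g : F'.obj c' ⟶ F.obj c,
    g ≫ f = F'.map (𝟙 c') ∧ g ≫ F.map (𝟙 c) = g

/-- `f : FC ⟶ F'C'` is an `(F_C, F'_{C'})`-semi-isomorphism. -/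
def IsSemiIsoAt (F : Semifunctor C D) (F' : Semifunctor C' D) (c : C) (c' : C')
    (f : F.obj c ⟶ F'.obj c') : Prop :=
  F.map (𝟙 c) ≫ f = f ∧ ∃ g : F'.obj c' ⟶ F.obj c,
    f ≫ g = F.map (𝟙 c) ∧ g ≫ f = F'.map (𝟙 c')

end Semifunctor

open Semifunctor

/-- A semiadjunction `F ⊣ₛ G`: seminatural unit and counit satisfying the
semitriangular identities `G(ε) ∘ ηG = G(Id)` and `εF ∘ F(η) = F(Id)`. -/
structure Semiadjunction {C : Type u₁} {D : Type u₂} [Category.{v₁} C] [Category.{v₂} D]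
    (F : Semifunctor C D) (G : Semifunctor D C) where
  unit : ∀ X : C, X ⟶ G.obj (F.obj X)
  counit : ∀ Y : D, F.obj (G.obj Y) ⟶ Y
  unit_natural : ∀ ⦃X Y : C⦄ (f : X ⟶ Y), f ≫ unit Y = unit X ≫ G.map (F.map f)
  counit_natural : ∀ ⦃X Y : D⦄ (g : X ⟶ Y), F.map (G.map g) ≫ counit Y = counit X ≫ g
  right_triangle : ∀ Y : D, unit (G.obj Y) ≫ G.map (counit Y) = G.map (𝟙 Y)
  left_triangle : ∀ X : C, F.map (unit X) ≫ counit (F.obj X) = F.map (𝟙 X)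

/-- The canonical semifunctor `E^e` attached to an idempotent seminatural
transformation `e : Id_C → Id_C`: identity on objects, `f ↦ f ∘ e_X = e_Y ∘ f`. -/
def canonicalSemifunctor {C : Type u₁} [Category.{v₁} C] (e : ∀ X : C, X ⟶ X)
    (hnat : ∀ ⦃X Y : C⦄ (f : X ⟶ Y), f ≫ e Y = e X ≫ f)
    (hid : ∀ X : C, e X ≫ e X = e X) : Semifunctor C C where
  obj X := X
  map {X Y} f := e X ≫ f
  map_comp {X Y Z} f g := by
    show e X ≫ f ≫ g = (e X ≫ f) ≫ e Y ≫ g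
    calc e X ≫ f ≫ g = (e X ≫ e X) ≫ f ≫ g := by rw [hid]
      _ = e X ≫ (e X ≫ f) ≫ g := by simp only [Category.assoc]
      _ = e X ≫ (f ≫ e Y) ≫ g := by rw [← hnat f]
      _ = (e X ≫ f) ≫ e Y ≫ g := by simp only [Category.assoc]


private lemma gamma_seminat
    {C : Type u₁} {D : Type u₂} [Category.{v₁} C] [Category.{v₂} D]
    {F : Semifunctor C D} {G G' : Semifunctor D C}
    (adj : Semiadjunction F G) (adj' : Semiadjunction F G') :
    Semifunctor.IsSeminatural
      (fun Y : D => adj'.unit (G.obj Y) ≫ G'.map (adj.counit Y)) := by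
  have nat : Semifunctor.IsNatural
      (fun Y : D => adj'.unit (G.obj Y) ≫ G'.map (adj.counit Y)) := by
    intro X Y g
    calc G.map g ≫ adj'.unit (G.obj Y) ≫ G'.map (adj.counit Y)
        = (G.map g ≫ adj'.unit (G.obj Y)) ≫ G'.map (adj.counit Y) := by
          rw [Category.assoc]
      _ = (adj'.unit (G.obj X) ≫ G'.map (F.map (G.map g))) ≫ G'.map (adj.counit Y) := by
          rw [adj'.unit_natural (G.map g)]
      _ = adj'.unit (G.obj X) ≫ G'.map (F.map (G.map g) ≫ adj.counit Y) := by
          rw [G'.map_comp, Category.assoc]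
      _ = adj'.unit (G.obj X) ≫ G'.map (adj.counit X ≫ g) := by
          rw [adj.counit_natural g]
      _ = (adj'.unit (G.obj X) ≫ G'.map (adj.counit X)) ≫ G'.map g := by
          rw [G'.map_comp, Category.assoc]
  refine ⟨nat, fun Y => ?_⟩
  have h := nat (𝟙 Y)
  simp only at h
  rw [h, Category.assoc, ← G'.map_comp, Category.comp_id]

private lemma gamma_comp
    {C : Type u₁} {D : Type u₂} [Category.{v₁} C] [Category.{v₂} D]
    {F : Semifunctor C D} {G G' : Semifunctor D C}
    (adj : Semiadjunction F G) (adj' : Semiadjunction F G') (Y : D) :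
    (adj'.unit (G.obj Y) ≫ G'.map (adj.counit Y)) ≫
      (adj.unit (G'.obj Y) ≫ G.map (adj'.counit Y)) = G.map (𝟙 Y) := by
  calc (adj'.unit (G.obj Y) ≫ G'.map (adj.counit Y)) ≫
      (adj.unit (G'.obj Y) ≫ G.map (adj'.counit Y))
      = adj'.unit (G.obj Y) ≫ (G'.map (adj.counit Y) ≫ adj.unit (G'.obj Y)) ≫
          G.map (adj'.counit Y) := by simp only [Category.assoc]
    _ = adj'.unit (G.obj Y) ≫ (adj.unit (G'.obj (F.obj (G.obj Y))) ≫
          G.map (F.map (G'.map (adj.counit Y)))) ≫ G.map (adj'.counit Y) := by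
        rw [adj.unit_natural (G'.map (adj.counit Y))]
    _ = adj'.unit (G.obj Y) ≫ adj.unit (G'.obj (F.obj (G.obj Y))) ≫
          G.map (F.map (G'.map (adj.counit Y)) ≫ adj'.counit Y) := by
        rw [G.map_comp]; simp only [Category.assoc]
    _ = adj'.unit (G.obj Y) ≫ adj.unit (G'.obj (F.obj (G.obj Y))) ≫
          G.map (adj'.counit (F.obj (G.obj Y)) ≫ adj.counit Y) := by
        rw [adj'.counit_natural (adj.counit Y)]
    _ = (adj'.unit (G.obj Y) ≫ adj.unit (G'.obj (F.obj (G.obj Y)))) ≫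
          G.map (adj'.counit (F.obj (G.obj Y))) ≫ G.map (adj.counit Y) := by
        rw [G.map_comp]; simp only [Category.assoc]
    _ = (adj.unit (G.obj Y) ≫ G.map (F.map (adj'.unit (G.obj Y)))) ≫
          G.map (adj'.counit (F.obj (G.obj Y))) ≫ G.map (adj.counit Y) := by
        rw [adj.unit_natural (adj'.unit (G.obj Y))]
    _ = adj.unit (G.obj Y) ≫ G.map (F.map (adj'.unit (G.obj Y)) ≫
          adj'.counit (F.obj (G.obj Y))) ≫ G.map (adj.counit Y) := by
        rw [G.map_comp]; simp only [Category.assoc]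
    _ = adj.unit (G.obj Y) ≫ G.map (F.map (𝟙 (G.obj Y))) ≫ G.map (adj.counit Y) := by
        rw [adj'.left_triangle (G.obj Y)]
    _ = (adj.unit (G.obj Y) ≫ G.map (F.map (𝟙 (G.obj Y)))) ≫ G.map (adj.counit Y) := by
        simp only [Category.assoc]
    _ = ((𝟙 (G.obj Y)) ≫ adj.unit (G.obj Y)) ≫ G.map (adj.counit Y) := by
        rw [adj.unit_natural (𝟙 (G.obj Y))]
    _ = adj.unit (G.obj Y) ≫ G.map (adj.counit Y) := by rw [Category.id_comp]
    _ = G.map (𝟙 Y) := adj.right_triangle Y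

/-- Semiadjoints are unique up to natural semi-isomorphism: given semiadjunctions
`F ⊣ₛ G` and `F ⊣ₛ G'`, the canonical comparison transformations
`γ_D = G'(ε_D) ∘ η'_{GD}` and `γ'_D = G(ε'_D) ∘ η_{G'D}` are seminatural and satisfy
`γ' ∘ γ = G(Id)` and `γ ∘ γ' = G'(Id)` componentwise. -/
theorem semiadjoint_unique_up_to_natural_semiIso
    {C : Type u₁} {D : Type u₂} [Category.{v₁} C] [Category.{v₂} D]
    {F : Semifunctor C D} {G G' : Semifunctor D C}
    (adj : Semiadjunction F G) (adj' : Semiadjunction F G') :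
    Semifunctor.IsSeminatural
      (fun Y : D => adj'.unit (G.obj Y) ≫ G'.map (adj.counit Y)) ∧
    Semifunctor.IsSeminatural
      (fun Y : D => adj.unit (G'.obj Y) ≫ G.map (adj'.counit Y)) ∧
    (∀ Y : D, (adj'.unit (G.obj Y) ≫ G'.map (adj.counit Y)) ≫
        (adj.unit (G'.obj Y) ≫ G.map (adj'.counit Y)) = G.map (𝟙 Y)) ∧
    (∀ Y : D, (adj.unit (G'.obj Y) ≫ G.map (adj'.counit Y)) ≫
        (adj'.unit (G.obj Y) ≫ G'.map (adj.counit Y)) = G'.map (𝟙 Y)) := by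
  exact ⟨gamma_seminat adj adj', gamma_seminat adj' adj, gamma_comp adj adj', gamma_comp adj' adj⟩
end

section
/- A semifunctor G : D → C is a right semiadjoint (i.e., there exist a semifunctor F : C → D and seminatural transformations η : Id_C → GF and ε : FG → Id_D such that G(ε_D) ∘ η_{GD} = G(Id_D) for all D) if and only if there exists a semifunctor F' : C → D such that F' ⊣ₛ G is a semiadjunction. Dually, a semifunctor F : C → D is a left semiadjoint (i.e., there exist a semifunctor G : D → C and seminatural transformations η : Id_C → GF and ε : FG → Id_D such that ε_{FC} ∘ F(η_C) = F(Id_C) for all C) if and only if there exists a semifunctor G' : D → C such that F ⊣ₛ G' is a semiadjunction. -/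
open CategoryTheory

universe v₁ v₂ v₃ v₄ u₁ u₂ u₃ u₄

open Semifunctor

/-- `G : D → C` is a right semiadjoint: there exist a semifunctor `F : C → D` and
seminatural transformations `η : Id_C → GF`, `ε : FG → Id_D` with
`G(ε_D) ∘ η_{GD} = G(Id_D)` for all `D`. -/
def Semifunctor.IsRightSemiadjoint {C : Type u₁} {D : Type u₂}
    [Category.{v₁} C] [Category.{v₂} D] (G : Semifunctor D C) : Prop :=
  ∃ (F : Semifunctor C D) (η : ∀ X : C, X ⟶ G.obj (F.obj X))
    (ε : ∀ Y : D, F.obj (G.obj Y) ⟶ Y),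
    (∀ ⦃X Y : C⦄ (f : X ⟶ Y), f ≫ η Y = η X ≫ G.map (F.map f)) ∧
    (∀ ⦃X Y : D⦄ (g : X ⟶ Y), F.map (G.map g) ≫ ε Y = ε X ≫ g) ∧
    (∀ Y : D, F.map (G.map (𝟙 Y)) ≫ ε Y = ε Y) ∧
    (∀ Y : D, η (G.obj Y) ≫ G.map (ε Y) = G.map (𝟙 Y))

/-- `F : C → D` is a left semiadjoint: there exist a semifunctor `G : D → C` and
seminatural transformations `η : Id_C → GF`, `ε : FG → Id_D` with
`ε_{FC} ∘ F(η_C) = F(Id_C)` for all `C`. -/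
def Semifunctor.IsLeftSemiadjoint {C : Type u₁} {D : Type u₂}
    [Category.{v₁} C] [Category.{v₂} D] (F : Semifunctor C D) : Prop :=
  ∃ (G : Semifunctor D C) (η : ∀ X : C, X ⟶ G.obj (F.obj X))
    (ε : ∀ Y : D, F.obj (G.obj Y) ⟶ Y),
    (∀ ⦃X Y : C⦄ (f : X ⟶ Y), f ≫ η Y = η X ≫ G.map (F.map f)) ∧
    (∀ ⦃X Y : D⦄ (g : X ⟶ Y), F.map (G.map g) ≫ ε Y = ε X ≫ g) ∧
    (∀ Y : D, F.map (G.map (𝟙 Y)) ≫ ε Y = ε Y) ∧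
    (∀ X : C, F.map (η X) ≫ ε (F.obj X) = F.map (𝟙 X))

section AuxSemiadj

variable {C : Type u₁} {D : Type u₂} [Category.{v₁} C] [Category.{v₂} D]

theorem aux_right (G : Semifunctor D C) (F : Semifunctor C D)
    (η : ∀ X : C, X ⟶ G.obj (F.obj X)) (ε : ∀ Y : D, F.obj (G.obj Y) ⟶ Y)
    (hη : ∀ ⦃X Y : C⦄ (f : X ⟶ Y), f ≫ η Y = η X ≫ G.map (F.map f))
    (hε : ∀ ⦃X Y : D⦄ (g : X ⟶ Y), F.map (G.map g) ≫ ε Y = ε X ≫ g)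
    (hεs : ∀ Y : D, F.map (G.map (𝟙 Y)) ≫ ε Y = ε Y)
    (hrt : ∀ Y : D, η (G.obj Y) ≫ G.map (ε Y) = G.map (𝟙 Y)) :
    ∃ F' : Semifunctor C D, Nonempty (Semiadjunction F' G) := by
  set t : ∀ X : C, F.obj X ⟶ F.obj X := fun X => F.map (η X) ≫ ε (F.obj X) with ht
  -- η absorbs G(t)
  have hηGt : ∀ X : C, η X ≫ G.map (t X) = η X ≫ G.map (𝟙 (F.obj X)) := by
    intro X
    calc η X ≫ G.map (t X)
        = η X ≫ G.map (F.map (η X)) ≫ G.map (ε (F.obj X)) := by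
          rw [ht]; rw [G.map_comp]
      _ = (η X ≫ G.map (F.map (η X))) ≫ G.map (ε (F.obj X)) := by
          rw [Category.assoc]
      _ = (η X ≫ η (G.obj (F.obj X))) ≫ G.map (ε (F.obj X)) := by rw [← hη (η X)]
      _ = η X ≫ η (G.obj (F.obj X)) ≫ G.map (ε (F.obj X)) := by rw [Category.assoc]
      _ = η X ≫ G.map (𝟙 (F.obj X)) := by rw [hrt]
  -- naturality of t
  have tnat : ∀ ⦃X Y : C⦄ (f : X ⟶ Y), F.map f ≫ t Y = t X ≫ F.map f := by
    intro X Y f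
    calc F.map f ≫ t Y
        = F.map (f ≫ η Y) ≫ ε (F.obj Y) := by rw [ht, F.map_comp, Category.assoc]
      _ = F.map (η X ≫ G.map (F.map f)) ≫ ε (F.obj Y) := by rw [hη f]
      _ = F.map (η X) ≫ F.map (G.map (F.map f)) ≫ ε (F.obj Y) := by
          rw [F.map_comp, Category.assoc]
      _ = F.map (η X) ≫ ε (F.obj X) ≫ F.map f := by rw [hε (F.map f)]
      _ = t X ≫ F.map f := by rw [ht, Category.assoc]
  -- idempotency of t
  have tidem : ∀ X : C, t X ≫ t X = t X := by
    intro X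
    calc t X ≫ t X
        = F.map (η X) ≫ ε (F.obj X) ≫ t X := by rw [ht]; rw [Category.assoc]
      _ = F.map (η X) ≫ F.map (G.map (t X)) ≫ ε (F.obj X) := by rw [hε (t X)]
      _ = F.map (η X ≫ G.map (t X)) ≫ ε (F.obj X) := by rw [F.map_comp, Category.assoc]
      _ = F.map (η X ≫ G.map (𝟙 (F.obj X))) ≫ ε (F.obj X) := by rw [hηGt]
      _ = F.map (η X) ≫ F.map (G.map (𝟙 (F.obj X))) ≫ ε (F.obj X) := by
          rw [F.map_comp, Category.assoc]
      _ = F.map (η X) ≫ ε (F.obj X) := by rw [hεs]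
      _ = t X := by rw [ht]
  -- t absorbs into ε
  have tε : ∀ Y : D, t (G.obj Y) ≫ ε Y = ε Y := by
    intro Y
    calc t (G.obj Y) ≫ ε Y
        = F.map (η (G.obj Y)) ≫ ε (F.obj (G.obj Y)) ≫ ε Y := by rw [ht, Category.assoc]
      _ = F.map (η (G.obj Y)) ≫ F.map (G.map (ε Y)) ≫ ε Y := by rw [hε (ε Y)]
      _ = F.map (η (G.obj Y) ≫ G.map (ε Y)) ≫ ε Y := by rw [F.map_comp, Category.assoc]
      _ = F.map (G.map (𝟙 Y)) ≫ ε Y := by rw [hrt]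
      _ = ε Y := hεs Y
  refine ⟨{ obj := F.obj, map := fun {X Y} f => t X ≫ F.map f, map_comp := ?_ }, ⟨{
    unit := η, counit := ε,
    unit_natural := ?_, counit_natural := ?_,
    right_triangle := ?_, left_triangle := ?_ }⟩⟩
  · intro X Y Z f g
    calc t X ≫ F.map (f ≫ g)
        = (t X ≫ t X) ≫ F.map f ≫ F.map g := by rw [tidem, F.map_comp]
      _ = t X ≫ (t X ≫ F.map f) ≫ F.map g := by simp only [Category.assoc]
      _ = t X ≫ (F.map f ≫ t Y) ≫ F.map g := by rw [← tnat f]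
      _ = (t X ≫ F.map f) ≫ t Y ≫ F.map g := by simp only [Category.assoc]
  · intro X Y f
    show f ≫ η Y = η X ≫ G.map (t X ≫ F.map f)
    calc f ≫ η Y
        = η X ≫ G.map (F.map f) := hη f
      _ = η X ≫ G.map (𝟙 (F.obj X) ≫ F.map f) := by rw [Category.id_comp]
      _ = (η X ≫ G.map (𝟙 (F.obj X))) ≫ G.map (F.map f) := by
          rw [G.map_comp, Category.assoc]
      _ = (η X ≫ G.map (t X)) ≫ G.map (F.map f) := by rw [hηGt]
      _ = η X ≫ G.map (t X ≫ F.map f) := by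
          simp only [ht, G.map_comp, Category.assoc]
  · intro X Y g
    show (t (G.obj X) ≫ F.map (G.map g)) ≫ ε Y = ε X ≫ g
    calc (t (G.obj X) ≫ F.map (G.map g)) ≫ ε Y
        = t (G.obj X) ≫ F.map (G.map g) ≫ ε Y := by rw [Category.assoc]
      _ = t (G.obj X) ≫ ε X ≫ g := by rw [hε g]
      _ = (t (G.obj X) ≫ ε X) ≫ g := by simp only [ht, Category.assoc]
      _ = ε X ≫ g := by rw [tε]
  · exact hrt
  · intro X
    show (t X ≫ F.map (η X)) ≫ ε (F.obj X) = t X ≫ F.map (𝟙 X)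
    calc (t X ≫ F.map (η X)) ≫ ε (F.obj X)
        = t X ≫ t X := by rw [ht, Category.assoc]
      _ = t X := tidem X
      _ = F.map (𝟙 X ≫ η X) ≫ ε (F.obj X) := by rw [ht, Category.id_comp]
      _ = F.map (𝟙 X) ≫ t X := by rw [F.map_comp, Category.assoc, ht]
      _ = t X ≫ F.map (𝟙 X) := tnat (𝟙 X)

theorem aux_left (F : Semifunctor C D) (G : Semifunctor D C)
    (η : ∀ X : C, X ⟶ G.obj (F.obj X)) (ε : ∀ Y : D, F.obj (G.obj Y) ⟶ Y)
    (hη : ∀ ⦃X Y : C⦄ (f : X ⟶ Y), f ≫ η Y = η X ≫ G.map (F.map f))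
    (hε : ∀ ⦃X Y : D⦄ (g : X ⟶ Y), F.map (G.map g) ≫ ε Y = ε X ≫ g)
    (hεs : ∀ Y : D, F.map (G.map (𝟙 Y)) ≫ ε Y = ε Y)
    (hlt : ∀ X : C, F.map (η X) ≫ ε (F.obj X) = F.map (𝟙 X)) :
    ∃ G' : Semifunctor D C, Nonempty (Semiadjunction F G') := by
  set s : ∀ Y : D, G.obj Y ⟶ G.obj Y := fun Y => η (G.obj Y) ≫ G.map (ε Y) with hs
  -- η absorbs s at F
  have hsF : ∀ X : C, η X ≫ s (F.obj X) = η X := by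
    intro X
    calc η X ≫ s (F.obj X)
        = (η X ≫ η (G.obj (F.obj X))) ≫ G.map (ε (F.obj X)) := by
          rw [hs, Category.assoc]
      _ = (η X ≫ G.map (F.map (η X))) ≫ G.map (ε (F.obj X)) := by rw [hη (η X)]
      _ = η X ≫ G.map (F.map (η X) ≫ ε (F.obj X)) := by rw [G.map_comp, Category.assoc]
      _ = η X ≫ G.map (F.map (𝟙 X)) := by rw [hlt]
      _ = 𝟙 X ≫ η X := (hη (𝟙 X)).symm
      _ = η X := Category.id_comp _
  -- naturality of s
  have snat : ∀ ⦃X Y : D⦄ (g : X ⟶ Y), G.map g ≫ s Y = s X ≫ G.map g := by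
    intro X Y g
    calc G.map g ≫ s Y
        = (G.map g ≫ η (G.obj Y)) ≫ G.map (ε Y) := by rw [hs, Category.assoc]
      _ = (η (G.obj X) ≫ G.map (F.map (G.map g))) ≫ G.map (ε Y) := by rw [hη (G.map g)]
      _ = η (G.obj X) ≫ G.map (F.map (G.map g) ≫ ε Y) := by rw [G.map_comp, Category.assoc]
      _ = η (G.obj X) ≫ G.map (ε X ≫ g) := by rw [hε g]
      _ = η (G.obj X) ≫ G.map (ε X) ≫ G.map g := by rw [G.map_comp]
      _ = s X ≫ G.map g := by rw [hs, Category.assoc]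
  -- idempotency of s
  have sidem : ∀ Y : D, s Y ≫ s Y = s Y := by
    intro Y
    calc s Y ≫ s Y
        = η (G.obj Y) ≫ G.map (ε Y) ≫ s Y := by rw [hs, Category.assoc]
      _ = η (G.obj Y) ≫ s (F.obj (G.obj Y)) ≫ G.map (ε Y) := by rw [snat (ε Y)]
      _ = (η (G.obj Y) ≫ s (F.obj (G.obj Y))) ≫ G.map (ε Y) := by
          simp only [hs, Category.assoc]
      _ = η (G.obj Y) ≫ G.map (ε Y) := by rw [hsF]
      _ = s Y := by rw [hs]
  -- s absorbs into ε
  have sFε : ∀ X : D, F.map (s X) ≫ ε X = F.map (𝟙 (G.obj X)) ≫ ε X := by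
    intro X
    calc F.map (s X) ≫ ε X
        = F.map (η (G.obj X)) ≫ F.map (G.map (ε X)) ≫ ε X := by
          rw [hs, F.map_comp, Category.assoc]
      _ = F.map (η (G.obj X)) ≫ ε (F.obj (G.obj X)) ≫ ε X := by rw [hε (ε X)]
      _ = (F.map (η (G.obj X)) ≫ ε (F.obj (G.obj X))) ≫ ε X := by rw [Category.assoc]
      _ = F.map (𝟙 (G.obj X)) ≫ ε X := by rw [hlt]
  refine ⟨{ obj := G.obj, map := fun {X Y} g => s X ≫ G.map g, map_comp := ?_ }, ⟨{
    unit := η, counit := fun Y => F.map (𝟙 (G.obj Y)) ≫ ε Y,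
    unit_natural := ?_, counit_natural := ?_,
    right_triangle := ?_, left_triangle := ?_ }⟩⟩
  · intro X Y Z g h
    calc s X ≫ G.map (g ≫ h)
        = (s X ≫ s X) ≫ G.map g ≫ G.map h := by rw [sidem, G.map_comp]
      _ = s X ≫ (s X ≫ G.map g) ≫ G.map h := by simp only [Category.assoc]
      _ = s X ≫ (G.map g ≫ s Y) ≫ G.map h := by rw [← snat g]
      _ = (s X ≫ G.map g) ≫ s Y ≫ G.map h := by simp only [Category.assoc]
  · intro X Y f
    show f ≫ η Y = η X ≫ s (F.obj X) ≫ G.map (F.map f)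
    calc f ≫ η Y
        = η X ≫ G.map (F.map f) := hη f
      _ = (η X ≫ s (F.obj X)) ≫ G.map (F.map f) := by rw [hsF]
      _ = η X ≫ s (F.obj X) ≫ G.map (F.map f) := by rw [Category.assoc]
  · intro X Y g
    show F.map (s X ≫ G.map g) ≫ F.map (𝟙 (G.obj Y)) ≫ ε Y =
      (F.map (𝟙 (G.obj X)) ≫ ε X) ≫ g
    calc F.map (s X ≫ G.map g) ≫ F.map (𝟙 (G.obj Y)) ≫ ε Y
        = F.map (s X) ≫ F.map (G.map g ≫ 𝟙 (G.obj Y)) ≫ ε Y := by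
          simp only [F.map_comp, Category.assoc]
      _ = F.map (s X) ≫ F.map (G.map g) ≫ ε Y := by rw [Category.comp_id]
      _ = F.map (s X) ≫ ε X ≫ g := by rw [hε g]
      _ = (F.map (s X) ≫ ε X) ≫ g := by rw [Category.assoc]
      _ = (F.map (𝟙 (G.obj X)) ≫ ε X) ≫ g := by rw [sFε]
  · intro Y
    show η (G.obj Y) ≫ s (F.obj (G.obj Y)) ≫ G.map (F.map (𝟙 (G.obj Y)) ≫ ε Y) =
      s Y ≫ G.map (𝟙 Y)
    calc η (G.obj Y) ≫ s (F.obj (G.obj Y)) ≫ G.map (F.map (𝟙 (G.obj Y)) ≫ ε Y)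
        = (η (G.obj Y) ≫ s (F.obj (G.obj Y))) ≫ G.map (F.map (𝟙 (G.obj Y)) ≫ ε Y) := by
          simp only [hs, Category.assoc]
      _ = η (G.obj Y) ≫ G.map (F.map (𝟙 (G.obj Y))) ≫ G.map (ε Y) := by
          rw [hsF, G.map_comp]
      _ = (η (G.obj Y) ≫ G.map (F.map (𝟙 (G.obj Y)))) ≫ G.map (ε Y) := by
          rw [Category.assoc]
      _ = (𝟙 (G.obj Y) ≫ η (G.obj Y)) ≫ G.map (ε Y) := by rw [← hη (𝟙 (G.obj Y))]
      _ = η (G.obj Y) ≫ G.map (ε Y) := by rw [Category.id_comp]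
      _ = η (G.obj Y) ≫ G.map (ε Y ≫ 𝟙 Y) := by rw [Category.comp_id]
      _ = s Y ≫ G.map (𝟙 Y) := by rw [hs, G.map_comp, Category.assoc]
  · intro X
    show F.map (η X) ≫ F.map (𝟙 (G.obj (F.obj X))) ≫ ε (F.obj X) = F.map (𝟙 X)
    calc F.map (η X) ≫ F.map (𝟙 (G.obj (F.obj X))) ≫ ε (F.obj X)
        = F.map (η X ≫ 𝟙 (G.obj (F.obj X))) ≫ ε (F.obj X) := by
          rw [F.map_comp, Category.assoc]
      _ = F.map (η X) ≫ ε (F.obj X) := by rw [Category.comp_id]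
      _ = F.map (𝟙 X) := hlt X

end AuxSemiadj

/-- A semifunctor `G` is a right semiadjoint iff there is a semifunctor `F'` with a
semiadjunction `F' ⊣ₛ G`; dually `F` is a left semiadjoint iff there is `G'` with a
semiadjunction `F ⊣ₛ G'`. -/
theorem isRightSemiadjoint_iff_and_isLeftSemiadjoint_iff
    {C : Type u₁} {D : Type u₂} [Category.{v₁} C] [Category.{v₂} D]
    (G : Semifunctor D C) (F : Semifunctor C D) :
    (G.IsRightSemiadjoint ↔ ∃ F' : Semifunctor C D, Nonempty (Semiadjunction F' G)) ∧
    (F.IsLeftSemiadjoint ↔ ∃ G' : Semifunctor D C, Nonempty (Semiadjunction F G')) := by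
  constructor
  · constructor
    · rintro ⟨F₀, η, ε, hη, hε, hεs, hrt⟩
      exact aux_right G F₀ η ε hη hε hεs hrt
    · rintro ⟨F', ⟨adj⟩⟩
      refine ⟨F', adj.unit, adj.counit, adj.unit_natural, adj.counit_natural, ?_,
        adj.right_triangle⟩
      intro Y
      have := adj.counit_natural (𝟙 Y)
      rwa [Category.comp_id] at this
  · constructor
    · rintro ⟨G₀, η, ε, hη, hε, hεs, hlt⟩
      exact aux_left F G₀ η ε hη hε hεs hlt
    · rintro ⟨G', ⟨adj⟩⟩
      refine ⟨G', adj.unit, adj.counit, adj.unit_natural, adj.counit_natural, ?_,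
        adj.left_triangle⟩
      intro Y
      have := adj.counit_natural (𝟙 Y)
      rwa [Category.comp_id] at this
end

section
/- Given a category C, any idempotent seminatural transformation e : Id_C → Id_C defines a semifunctor E^e : C → C (acting as the identity on objects and sending f : X → Y to f ∘ e_X = e_Y ∘ f) which is self-semiadjoint: E^e ⊣ₛ E^e is a semiadjunction with unit and counit both given on components by e_X : X → X. Conversely, if a semifunctor E : C → C is self-semiadjoint via seminatural transformations η : Id_C → EE and ε : EE → Id_C with E(ε_X) ∘ η_{EX} = E(Id_X) and ε_{EX} ∘ E(η_X) = E(Id_X) for all X, then the family e_X := ε_{EX} ∘ E(η_X) : EX → EX is an idempotent seminatural transformation E → E. -/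
open CategoryTheory

universe v₁ v₂ v₃ v₄ u₁ u₂ u₃ u₄

open Semifunctor

/-- Any idempotent seminatural transformation `e : Id_C → Id_C` yields the canonical
semifunctor `E^e` which is self-semiadjoint, with unit and counit given by `e`;
conversely any self-semiadjoint semifunctor `E` yields an idempotent seminatural
transformation `E → E` with components `ε_{EX} ∘ E(η_X)`. -/
theorem canonicalSemifunctor_self_semiadjoint
    {C : Type u₁} [Category.{v₁} C] :
    (∀ (e : ∀ X : C, X ⟶ X)
      (hnat : ∀ ⦃X Y : C⦄ (f : X ⟶ Y), f ≫ e Y = e X ≫ f)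
      (hid : ∀ X : C, e X ≫ e X = e X),
      ∃ adj : Semiadjunction (canonicalSemifunctor e hnat hid)
          (canonicalSemifunctor e hnat hid),
        (∀ X : C, adj.unit X = e X) ∧ (∀ X : C, adj.counit X = e X)) ∧
    (∀ (Ef : Semifunctor C C) (η : ∀ X : C, X ⟶ Ef.obj (Ef.obj X))
      (ε : ∀ X : C, Ef.obj (Ef.obj X) ⟶ X),
      (∀ ⦃X Y : C⦄ (f : X ⟶ Y), f ≫ η Y = η X ≫ Ef.map (Ef.map f)) →
      (∀ ⦃X Y : C⦄ (f : X ⟶ Y), Ef.map (Ef.map f) ≫ ε Y = ε X ≫ f) →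
      (∀ X : C, Ef.map (Ef.map (𝟙 X)) ≫ ε X = ε X) →
      (∀ X : C, η (Ef.obj X) ≫ Ef.map (ε X) = Ef.map (𝟙 X)) →
      (∀ X : C, Ef.map (η X) ≫ ε (Ef.obj X) = Ef.map (𝟙 X)) →
      Semifunctor.IsSeminatural (fun X : C => Ef.map (η X) ≫ ε (Ef.obj X)) ∧
      (∀ X : C, (Ef.map (η X) ≫ ε (Ef.obj X)) ≫ (Ef.map (η X) ≫ ε (Ef.obj X)) =
        Ef.map (η X) ≫ ε (Ef.obj X))) := by
  constructor
  · intro e hnat hid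
    refine ⟨⟨e, e, ?_, ?_, ?_, ?_⟩, fun X => rfl, fun X => rfl⟩
    · intro X Y f
      show f ≫ e Y = e X ≫ e X ≫ e X ≫ f
      rw [hnat f, ← Category.assoc, hid, ← Category.assoc, hid]
    · intro X Y g
      show (e X ≫ e X ≫ g) ≫ e Y = e X ≫ g
      rw [Category.assoc, Category.assoc, hnat g, ← Category.assoc (e X),
        hid, ← Category.assoc, hid]
    · intro Y
      show e Y ≫ e Y ≫ e Y = e Y ≫ 𝟙 Y
      rw [Category.comp_id, ← Category.assoc, hid, hid]
    · intro X
      show (e X ≫ e X) ≫ e X = e X ≫ 𝟙 X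
      rw [Category.comp_id, hid, hid]
  · intro Ef η ε hη hε hεsemi hrt hlt
    have key : ∀ X : C, Ef.map (η X) ≫ ε (Ef.obj X) = Ef.map (𝟙 X) := hlt
    refine ⟨⟨fun X Y f => ?_, fun X => ?_⟩, fun X => ?_⟩ <;>
      simp only [key, ← Ef.map_comp, Category.comp_id, Category.id_comp]
end

section
/- Let F ⊣ₛ G : D → C be a semiadjunction of semifunctors with unit η and counit ε. Then: (1) F is faithful if and only if η_C is a monomorphism in C for every object C; (2) F is semifull if and only if for every object C there exists ν_C : GFC → C with η_C ∘ ν_C = GF(Id_C); (3) G is faithful if and only if ε_D is an epimorphism in D for every object D; (4) G is semifull if and only if for every object D there exists γ_D : D → FGD with γ_D ∘ ε_D = FG(Id_D). -/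
open CategoryTheory

universe v₁ v₂ v₃ v₄ u₁ u₂ u₃ u₄

open Semifunctor

/-- Characterization of faithfulness and semifullness for semiadjoint semifunctors:
`F` is faithful iff each `η_C` is a monomorphism; `F` is semifull iff each `η_C` is a
`C`-semisplit-epi; `G` is faithful iff each `ε_D` is an epimorphism; `G` is semifull
iff each `ε_D` is a `D`-semisplit-mono. -/
theorem semiadjunction_faithful_semifull_char
    {C : Type u₁} {D : Type u₂} [Category.{v₁} C] [Category.{v₂} D]
    {F : Semifunctor C D} {G : Semifunctor D C} (adj : Semiadjunction F G) :
    (F.Faithful ↔ ∀ X : C, Mono (adj.unit X)) ∧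
    (F.Semifull ↔ ∀ X : C, ∃ ν : G.obj (F.obj X) ⟶ X,
      ν ≫ adj.unit X = G.map (F.map (𝟙 X))) ∧
    (G.Faithful ↔ ∀ Y : D, Epi (adj.counit Y)) ∧
    (G.Semifull ↔ ∀ Y : D, ∃ γ : Y ⟶ F.obj (G.obj Y),
      adj.counit Y ≫ γ = F.map (G.map (𝟙 Y))) := by
  obtain ⟨η, ε, ηnat, εnat, rtri, ltri⟩ := adj
  refine ⟨⟨fun hF X => ⟨fun {W} u v h => ?_⟩, fun hη X Y f g h => ?_⟩,
    ⟨fun hF X => ?_, fun hν X Y f => ?_⟩,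
    ⟨fun hG Y => ⟨fun {Z} u v h => ?_⟩, fun hε X Y f g h => ?_⟩,
    ⟨fun hG Y => ?_, fun hγ X Y f => ?_⟩⟩
  · -- F faithful → unit mono
    apply hF
    have : F.map u ≫ F.map (η X) ≫ ε (F.obj X) = F.map v ≫ F.map (η X) ≫ ε (F.obj X) := by
      rw [← Category.assoc, ← Category.assoc, ← F.map_comp, ← F.map_comp, h]
    rw [ltri] at this
    calc F.map u = F.map (u ≫ 𝟙 X) := by rw [Category.comp_id]
      _ = F.map u ≫ F.map (𝟙 X) := F.map_comp _ _
      _ = F.map v ≫ F.map (𝟙 X) := this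
      _ = F.map (v ≫ 𝟙 X) := (F.map_comp _ _).symm
      _ = F.map v := by rw [Category.comp_id]
  · -- unit mono → F faithful
    have : f ≫ η Y = g ≫ η Y := by rw [ηnat, ηnat, h]
    exact (hη Y).right_cancellation _ _ this
  · -- F semifull → ν
    obtain ⟨ν, hνe⟩ := hF (ε (F.obj X))
    refine ⟨ν, ?_⟩
    have hη1 : η (G.obj (F.obj X)) ≫ G.map (F.map (𝟙 (G.obj (F.obj X)))) =
        η (G.obj (F.obj X)) := by rw [← ηnat, Category.id_comp]
    calc ν ≫ η X = η (G.obj (F.obj X)) ≫ G.map (F.map ν) := ηnat ν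
      _ = η (G.obj (F.obj X)) ≫ G.map (F.map (𝟙 _) ≫ ε (F.obj X) ≫ F.map (𝟙 X)) := by
          rw [hνe]
      _ = η (G.obj (F.obj X)) ≫ G.map (F.map (𝟙 _)) ≫ G.map (ε (F.obj X)) ≫
            G.map (F.map (𝟙 X)) := by rw [G.map_comp, G.map_comp]
      _ = (η (G.obj (F.obj X)) ≫ G.map (F.map (𝟙 _))) ≫ G.map (ε (F.obj X)) ≫
            G.map (F.map (𝟙 X)) := by rw [Category.assoc]
      _ = η (G.obj (F.obj X)) ≫ G.map (ε (F.obj X)) ≫ G.map (F.map (𝟙 X)) := by rw [hη1]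
      _ = (η (G.obj (F.obj X)) ≫ G.map (ε (F.obj X))) ≫ G.map (F.map (𝟙 X)) := by
          rw [Category.assoc]
      _ = G.map (𝟙 (F.obj X)) ≫ G.map (F.map (𝟙 X)) := by rw [rtri]
      _ = G.map (𝟙 (F.obj X) ≫ F.map (𝟙 X)) := (G.map_comp _ _).symm
      _ = G.map (F.map (𝟙 X)) := by rw [Category.id_comp]
  · -- ν → F semifull
    obtain ⟨ν, hνY⟩ := hν Y
    refine ⟨η X ≫ G.map f ≫ ν, ?_⟩
    have key : F.map ν ≫ F.map (𝟙 Y) = ε (F.obj Y) ≫ F.map (𝟙 Y) := by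
      calc F.map ν ≫ F.map (𝟙 Y) = F.map ν ≫ F.map (η Y) ≫ ε (F.obj Y) := by rw [ltri]
        _ = (F.map ν ≫ F.map (η Y)) ≫ ε (F.obj Y) := by rw [Category.assoc]
        _ = F.map (ν ≫ η Y) ≫ ε (F.obj Y) := by rw [F.map_comp]
        _ = F.map (G.map (F.map (𝟙 Y))) ≫ ε (F.obj Y) := by rw [hνY]
        _ = ε (F.obj Y) ≫ F.map (𝟙 Y) := εnat _
    calc F.map (η X ≫ G.map f ≫ ν)
        = F.map (η X ≫ G.map f ≫ ν) ≫ F.map (𝟙 Y) := by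
          rw [← F.map_comp]; simp only [Category.assoc, Category.comp_id]
      _ = (F.map (η X) ≫ F.map (G.map f) ≫ F.map ν) ≫ F.map (𝟙 Y) := by
          rw [F.map_comp, F.map_comp]
      _ = F.map (η X) ≫ F.map (G.map f) ≫ F.map ν ≫ F.map (𝟙 Y) := by
          simp only [Category.assoc]
      _ = F.map (η X) ≫ F.map (G.map f) ≫ ε (F.obj Y) ≫ F.map (𝟙 Y) := by rw [key]
      _ = F.map (η X) ≫ (F.map (G.map f) ≫ ε (F.obj Y)) ≫ F.map (𝟙 Y) := by
          simp only [Category.assoc]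
      _ = F.map (η X) ≫ (ε (F.obj X) ≫ f) ≫ F.map (𝟙 Y) := by rw [εnat]
      _ = (F.map (η X) ≫ ε (F.obj X)) ≫ f ≫ F.map (𝟙 Y) := by simp only [Category.assoc]
      _ = F.map (𝟙 X) ≫ f ≫ F.map (𝟙 Y) := by rw [ltri]
  · -- G faithful → counit epi
    apply hG
    have : (η (G.obj Y) ≫ G.map (ε Y)) ≫ G.map u =
        (η (G.obj Y) ≫ G.map (ε Y)) ≫ G.map v := by
      simp only [Category.assoc, ← G.map_comp, h]
    rw [rtri] at this
    calc G.map u = G.map (𝟙 Y ≫ u) := by rw [Category.id_comp]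
      _ = G.map (𝟙 Y) ≫ G.map u := G.map_comp _ _
      _ = G.map (𝟙 Y) ≫ G.map v := this
      _ = G.map (𝟙 Y ≫ v) := (G.map_comp _ _).symm
      _ = G.map v := by rw [Category.id_comp]
  · -- counit epi → G faithful
    have : ε X ≫ f = ε X ≫ g := by rw [← εnat, ← εnat, h]
    exact (hε X).left_cancellation _ _ this
  · -- G semifull → γ
    obtain ⟨γ, hγe⟩ := hG (η (G.obj Y))
    refine ⟨γ, ?_⟩
    have hε1 : F.map (G.map (𝟙 (F.obj (G.obj Y)))) ≫ ε (F.obj (G.obj Y)) =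
        ε (F.obj (G.obj Y)) := by rw [εnat, Category.comp_id]
    calc ε Y ≫ γ = F.map (G.map γ) ≫ ε (F.obj (G.obj Y)) := (εnat γ).symm
      _ = F.map (G.map (𝟙 Y) ≫ η (G.obj Y) ≫ G.map (𝟙 _)) ≫ ε (F.obj (G.obj Y)) := by
          rw [hγe]
      _ = F.map (G.map (𝟙 Y)) ≫ F.map (η (G.obj Y)) ≫ F.map (G.map (𝟙 _)) ≫
            ε (F.obj (G.obj Y)) := by
          rw [F.map_comp, F.map_comp]; simp only [Category.assoc]
      _ = F.map (G.map (𝟙 Y)) ≫ F.map (η (G.obj Y)) ≫ ε (F.obj (G.obj Y)) := by rw [hε1]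
      _ = F.map (G.map (𝟙 Y)) ≫ F.map (𝟙 (G.obj Y)) := by rw [ltri]
      _ = F.map (G.map (𝟙 Y) ≫ 𝟙 (G.obj Y)) := (F.map_comp _ _).symm
      _ = F.map (G.map (𝟙 Y)) := by rw [Category.comp_id]
  · -- γ → G semifull
    obtain ⟨γ, hγX⟩ := hγ X
    refine ⟨γ ≫ F.map f ≫ ε Y, ?_⟩
    have key : G.map (𝟙 X) ≫ G.map γ = G.map (𝟙 X) ≫ η (G.obj X) := by
      calc G.map (𝟙 X) ≫ G.map γ = (η (G.obj X) ≫ G.map (ε X)) ≫ G.map γ := by rw [rtri]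
        _ = η (G.obj X) ≫ G.map (ε X ≫ γ) := by rw [Category.assoc, G.map_comp]
        _ = η (G.obj X) ≫ G.map (F.map (G.map (𝟙 X))) := by rw [hγX]
        _ = G.map (𝟙 X) ≫ η (G.obj X) := (ηnat _).symm
    calc G.map (γ ≫ F.map f ≫ ε Y)
        = G.map (𝟙 X) ≫ G.map (γ ≫ F.map f ≫ ε Y) := by
          rw [← G.map_comp, Category.id_comp]
      _ = G.map (𝟙 X) ≫ G.map γ ≫ G.map (F.map f) ≫ G.map (ε Y) := by
          rw [G.map_comp, G.map_comp]
      _ = (G.map (𝟙 X) ≫ G.map γ) ≫ G.map (F.map f) ≫ G.map (ε Y) := by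
          simp only [Category.assoc]
      _ = (G.map (𝟙 X) ≫ η (G.obj X)) ≫ G.map (F.map f) ≫ G.map (ε Y) := by rw [key]
      _ = G.map (𝟙 X) ≫ (η (G.obj X) ≫ G.map (F.map f)) ≫ G.map (ε Y) := by
          simp only [Category.assoc]
      _ = G.map (𝟙 X) ≫ (f ≫ η (G.obj Y)) ≫ G.map (ε Y) := by rw [← ηnat]
      _ = G.map (𝟙 X) ≫ f ≫ η (G.obj Y) ≫ G.map (ε Y) := by simp only [Category.assoc]
      _ = G.map (𝟙 X) ≫ f ≫ G.map (𝟙 Y) := by rw [rtri]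
end

section
/- Let F ⊣ₛ G : D → C be a semiadjunction of semifunctors with unit η and counit ε. Then: (1) F is semifully faithful if and only if for every object C of C there exists a morphism ν_C : GFC → C with ν_C ∘ η_C = Id_C and η_C ∘ ν_C = GF(Id_C); (2) G is semifully faithful if and only if for every object D of D there exists a morphism γ_D : D → FGD with ε_D ∘ γ_D = Id_D and γ_D ∘ ε_D = FG(Id_D). -/
open CategoryTheory

universe v₁ v₂ v₃ v₄ u₁ u₂ u₃ u₄

open Semifunctor

section Aux

variable {C : Type u₁} {D : Type u₂} [Category.{v₁} C] [Category.{v₂} D]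

lemma Semifunctor.map_id_comp (F : Semifunctor C D) {X Y : C} (f : X ⟶ Y) :
    F.map (𝟙 X) ≫ F.map f = F.map f := by
  rw [← F.map_comp, Category.id_comp]

lemma Semifunctor.map_comp_id (F : Semifunctor C D) {X Y : C} (f : X ⟶ Y) :
    F.map f ≫ F.map (𝟙 Y) = F.map f := by
  rw [← F.map_comp, Category.comp_id]

lemma Semiadjunction.unit_idem {F : Semifunctor C D} {G : Semifunctor D C}
    (adj : Semiadjunction F G) (X : C) :
    adj.unit X ≫ G.map (F.map (𝟙 X)) = adj.unit X := by
  rw [← adj.unit_natural (𝟙 X), Category.id_comp]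

lemma Semiadjunction.counit_idem {F : Semifunctor C D} {G : Semifunctor D C}
    (adj : Semiadjunction F G) (Y : D) :
    F.map (G.map (𝟙 Y)) ≫ adj.counit Y = adj.counit Y := by
  rw [adj.counit_natural (𝟙 Y), Category.comp_id]

end Aux

/-- Characterization of semifully faithful semiadjoint semifunctors: `F` is
semifully faithful iff each `η_C` is a `(C,C)`-semi-isomorphism, and `G` is
semifully faithful iff each `ε_D` is a `(D,D)`-semi-isomorphism. -/
theorem semiadjunction_semifullyFaithful_char
    {C : Type u₁} {D : Type u₂} [Category.{v₁} C] [Category.{v₂} D]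
    {F : Semifunctor C D} {G : Semifunctor D C} (adj : Semiadjunction F G) :
    (F.SemifullyFaithful ↔ ∀ X : C, ∃ ν : G.obj (F.obj X) ⟶ X,
      adj.unit X ≫ ν = 𝟙 X ∧ ν ≫ adj.unit X = G.map (F.map (𝟙 X))) ∧
    (G.SemifullyFaithful ↔ ∀ Y : D, ∃ γ : Y ⟶ F.obj (G.obj Y),
      γ ≫ adj.counit Y = 𝟙 Y ∧ adj.counit Y ≫ γ = F.map (G.map (𝟙 Y))) := by
  constructor
  · constructor
    · rintro ⟨hfaith, hfull⟩ X
      obtain ⟨ν, hν⟩ := hfull (adj.counit (F.obj X))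
      refine ⟨ν, ?_, ?_⟩
      · apply hfaith
        rw [F.map_comp, hν]
        calc F.map (adj.unit X) ≫ F.map (𝟙 (G.obj (F.obj X))) ≫
              adj.counit (F.obj X) ≫ F.map (𝟙 X)
            = (F.map (adj.unit X) ≫ F.map (𝟙 (G.obj (F.obj X)))) ≫
              adj.counit (F.obj X) ≫ F.map (𝟙 X) := by rw [Category.assoc]
          _ = (F.map (adj.unit X) ≫ adj.counit (F.obj X)) ≫ F.map (𝟙 X) := by
              rw [F.map_comp_id, Category.assoc]
          _ = F.map (𝟙 X) ≫ F.map (𝟙 X) := by rw [adj.left_triangle]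
          _ = F.map (𝟙 X) := F.map_id_comp _
      · calc ν ≫ adj.unit X
            = adj.unit (G.obj (F.obj X)) ≫ G.map (F.map ν) := adj.unit_natural ν
          _ = adj.unit (G.obj (F.obj X)) ≫ G.map (F.map (𝟙 (G.obj (F.obj X)))) ≫
              G.map (adj.counit (F.obj X)) ≫ G.map (F.map (𝟙 X)) := by
              rw [hν, G.map_comp, G.map_comp]
          _ = (adj.unit (G.obj (F.obj X)) ≫ G.map (F.map (𝟙 (G.obj (F.obj X))))) ≫
              G.map (adj.counit (F.obj X)) ≫ G.map (F.map (𝟙 X)) := by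
              rw [Category.assoc]
          _ = (adj.unit (G.obj (F.obj X)) ≫ G.map (adj.counit (F.obj X))) ≫
              G.map (F.map (𝟙 X)) := by rw [adj.unit_idem, Category.assoc]
          _ = G.map (𝟙 (F.obj X)) ≫ G.map (F.map (𝟙 X)) := by rw [adj.right_triangle]
          _ = G.map (F.map (𝟙 X)) := G.map_id_comp _
    · intro h
      constructor
      · intro X Y f g hfg
        obtain ⟨ν, h1, _⟩ := h Y
        calc f = f ≫ 𝟙 Y := (Category.comp_id f).symm
          _ = f ≫ adj.unit Y ≫ ν := by rw [← h1]
          _ = (adj.unit X ≫ G.map (F.map f)) ≫ ν := by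
              rw [← Category.assoc, adj.unit_natural f]
          _ = (adj.unit X ≫ G.map (F.map g)) ≫ ν := by rw [hfg]
          _ = g ≫ adj.unit Y ≫ ν := by rw [← adj.unit_natural g, Category.assoc]
          _ = g ≫ 𝟙 Y := by rw [h1]
          _ = g := Category.comp_id g
      · intro X Y f
        obtain ⟨ν, h1, h2⟩ := h Y
        refine ⟨adj.unit X ≫ G.map f ≫ ν, ?_⟩
        have hFν : F.map ν = adj.counit (F.obj Y) ≫ F.map (𝟙 Y) := by
          have := congrArg (fun t => F.map t ≫ adj.counit (F.obj Y)) h2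
          simp only [F.map_comp] at this
          rw [Category.assoc, adj.left_triangle, F.map_comp_id,
            adj.counit_natural (F.map (𝟙 Y))] at this
          exact this
        calc F.map (adj.unit X ≫ G.map f ≫ ν)
            = F.map (adj.unit X) ≫ F.map (G.map f) ≫ F.map ν := by
              rw [F.map_comp, F.map_comp]
          _ = F.map (adj.unit X) ≫ (F.map (G.map f) ≫ adj.counit (F.obj Y)) ≫
              F.map (𝟙 Y) := by rw [hFν, Category.assoc]
          _ = (F.map (adj.unit X) ≫ adj.counit (F.obj X)) ≫ f ≫ F.map (𝟙 Y) := by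
              rw [adj.counit_natural f]; simp only [Category.assoc]
          _ = F.map (𝟙 X) ≫ f ≫ F.map (𝟙 Y) := by rw [adj.left_triangle]
  · constructor
    · rintro ⟨hfaith, hfull⟩ Y
      obtain ⟨γ, hγ⟩ := hfull (adj.unit (G.obj Y))
      refine ⟨γ, ?_, ?_⟩
      · apply hfaith
        rw [G.map_comp, hγ]
        calc (G.map (𝟙 Y) ≫ adj.unit (G.obj Y) ≫ G.map (𝟙 (F.obj (G.obj Y)))) ≫
              G.map (adj.counit Y)
            = G.map (𝟙 Y) ≫ adj.unit (G.obj Y) ≫ G.map (𝟙 (F.obj (G.obj Y))) ≫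
              G.map (adj.counit Y) := by simp only [Category.assoc]
          _ = G.map (𝟙 Y) ≫ adj.unit (G.obj Y) ≫ G.map (adj.counit Y) := by
              rw [G.map_id_comp]
          _ = G.map (𝟙 Y) ≫ G.map (𝟙 Y) := by rw [adj.right_triangle]
          _ = G.map (𝟙 Y) := G.map_id_comp _
      · calc adj.counit Y ≫ γ
            = F.map (G.map γ) ≫ adj.counit (F.obj (G.obj Y)) :=
              (adj.counit_natural γ).symm
          _ = (F.map (G.map (𝟙 Y)) ≫ F.map (adj.unit (G.obj Y)) ≫
              F.map (G.map (𝟙 (F.obj (G.obj Y))))) ≫ adj.counit (F.obj (G.obj Y)) := by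
              rw [hγ, F.map_comp, F.map_comp]
          _ = F.map (G.map (𝟙 Y)) ≫ F.map (adj.unit (G.obj Y)) ≫
              (F.map (G.map (𝟙 (F.obj (G.obj Y)))) ≫ adj.counit (F.obj (G.obj Y))) := by
              simp only [Category.assoc]
          _ = F.map (G.map (𝟙 Y)) ≫ F.map (adj.unit (G.obj Y)) ≫
              adj.counit (F.obj (G.obj Y)) := by rw [adj.counit_idem]
          _ = F.map (G.map (𝟙 Y)) ≫ F.map (𝟙 (G.obj Y)) := by rw [adj.left_triangle]
          _ = F.map (G.map (𝟙 Y)) := F.map_comp_id _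
    · intro h
      constructor
      · intro X Y f g hfg
        obtain ⟨γ, h1, _⟩ := h X
        calc f = 𝟙 X ≫ f := (Category.id_comp f).symm
          _ = γ ≫ adj.counit X ≫ f := by rw [← h1, Category.assoc]
          _ = γ ≫ F.map (G.map f) ≫ adj.counit Y := by rw [adj.counit_natural f]
          _ = γ ≫ F.map (G.map g) ≫ adj.counit Y := by rw [hfg]
          _ = γ ≫ adj.counit X ≫ g := by rw [adj.counit_natural g]
          _ = 𝟙 X ≫ g := by rw [← Category.assoc, h1]
          _ = g := Category.id_comp g
      · intro X Y f
        obtain ⟨γ, h1, h2⟩ := h X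
        refine ⟨γ ≫ F.map f ≫ adj.counit Y, ?_⟩
        have hGγ : G.map γ = G.map (𝟙 X) ≫ adj.unit (G.obj X) := by
          have := congrArg (fun t => adj.unit (G.obj X) ≫ G.map t) h2
          simp only [G.map_comp] at this
          rw [← Category.assoc, adj.right_triangle, G.map_id_comp,
            ← adj.unit_natural (G.map (𝟙 X))] at this
          exact this
        calc G.map (γ ≫ F.map f ≫ adj.counit Y)
            = G.map γ ≫ G.map (F.map f) ≫ G.map (adj.counit Y) := by
              rw [G.map_comp, G.map_comp]
          _ = G.map (𝟙 X) ≫ (adj.unit (G.obj X) ≫ G.map (F.map f)) ≫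
              G.map (adj.counit Y) := by rw [hGγ]; simp only [Category.assoc]
          _ = G.map (𝟙 X) ≫ f ≫ adj.unit (G.obj Y) ≫ G.map (adj.counit Y) := by
              rw [← adj.unit_natural f]; simp only [Category.assoc]
          _ = G.map (𝟙 X) ≫ f ≫ G.map (𝟙 Y) := by rw [adj.right_triangle]
end

section
/- (Maschke-type Theorem) Let F : C → D be a separable semifunctor and let f : C → C' be a morphism in C. (1) If F(f) is an F_C-semisplit-mono (there exists g : FC' → FC with g ∘ F(f) = F(Id_C)), then f is a split monomorphism in C. (2) If F(f) is an F_{C'}-semisplit-epi (there exists g : FC' → FC with F(f) ∘ g = F(Id_{C'})), then f is a split epimorphism in C. (3) If F(f) is an (F_C,F_{C'})-semi-isomorphism, then f is an isomorphism in C. -/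
open CategoryTheory

universe v₁ v₂ v₃ v₄ u₁ u₂ u₃ u₄

open Semifunctor

/-- Maschke-type Theorem for separable semifunctors: if `F(f)` is an `F_C`-semisplit-mono
(resp. `F_{C'}`-semisplit-epi, `(F_C,F_{C'})`-semi-isomorphism), then `f` is a split
monomorphism (resp. split epimorphism, isomorphism). -/
theorem maschke_for_separable_semifunctors
    {C : Type u₁} {D : Type u₂} [Category.{v₁} C] [Category.{v₂} D]
    (F : Semifunctor C D) (hF : F.Separable) {c c' : C} (f : c ⟶ c') :
    ((∃ g : F.obj c' ⟶ F.obj c, F.map f ≫ g = F.map (𝟙 c)) →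
      ∃ r : c' ⟶ c, f ≫ r = 𝟙 c) ∧
    ((∃ g : F.obj c' ⟶ F.obj c, g ≫ F.map f = F.map (𝟙 c')) →
      ∃ s : c' ⟶ c, s ≫ f = 𝟙 c') ∧
    (Semifunctor.IsSemiIsoAt F F c c' (F.map f) → IsIso f) := by
  obtain ⟨P, hnat, hret⟩ := hF
  have part1 : (∃ g : F.obj c' ⟶ F.obj c, F.map f ≫ g = F.map (𝟙 c)) →
      ∃ r : c' ⟶ c, f ≫ r = 𝟙 c := by
    rintro ⟨g, hg⟩
    refine ⟨P c' c g ≫ 𝟙 c, ?_⟩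
    have h1 := hnat c c' c c f g (𝟙 c)
    have h2 : F.map f ≫ g ≫ F.map (𝟙 c) = F.map (𝟙 c) := by
      rw [← Category.assoc, hg, ← F.map_comp, Category.id_comp]
    rw [← h1, h2, hret]
  have part2 : (∃ g : F.obj c' ⟶ F.obj c, g ≫ F.map f = F.map (𝟙 c')) →
      ∃ s : c' ⟶ c, s ≫ f = 𝟙 c' := by
    rintro ⟨g, hg⟩
    have h1 := hnat c' c' c c' (𝟙 c') g f
    have h2 : F.map (𝟙 c') ≫ g ≫ F.map f = F.map (𝟙 c') := by
      rw [hg, ← F.map_comp, Category.id_comp]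
    refine ⟨P c' c g, ?_⟩
    have : P c' c' (F.map (𝟙 c') ≫ g ≫ F.map f) = 𝟙 c' ≫ P c' c g ≫ f := h1
    rw [h2, hret] at this
    rw [Category.id_comp] at this
    exact this.symm
  refine ⟨part1, part2, ?_⟩
  rintro ⟨-, g, hg1, hg2⟩
  obtain ⟨r, hr⟩ := part1 ⟨g, hg1⟩
  obtain ⟨s, hs⟩ := part2 ⟨g, hg2⟩
  have hrs : s = r := by
    calc s = s ≫ (f ≫ r) := by rw [hr, Category.comp_id]
      _ = (s ≫ f) ≫ r := by rw [Category.assoc]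
      _ = r := by rw [hs, Category.id_comp]
  exact ⟨r, hr, hrs ▸ hs⟩
end

section
/- (Rafael-type Theorem for separable semifunctors) Let F ⊣ₛ G : D → C be a semiadjunction of semifunctors with unit η and counit ε. Then: (1) F is separable if and only if there exists a seminatural transformation ν : GF → Id_C with ν_X ∘ η_X = Id_X for all objects X of C; (2) G is separable if and only if there exists a seminatural transformation γ : Id_D → FG with ε_D ∘ γ_D = Id_D for all objects D of D. -/
open CategoryTheory

universe v₁ v₂ v₃ v₄ u₁ u₂ u₃ u₄

open Semifunctor

/-- Rafael-type Theorem for separable semifunctors: given a semiadjunction `F ⊣ₛ G`,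
`F` is separable iff the unit is a natural split-mono and `G` is separable iff the
counit is a natural split-epi. -/
theorem rafael_separable_semifunctors
    {C : Type u₁} {D : Type u₂} [Category.{v₁} C] [Category.{v₂} D]
    {F : Semifunctor C D} {G : Semifunctor D C} (adj : Semiadjunction F G) :
    (F.Separable ↔ ∃ ν : ∀ X : C, G.obj (F.obj X) ⟶ X,
      (∀ ⦃X Y : C⦄ (f : X ⟶ Y), G.map (F.map f) ≫ ν Y = ν X ≫ f) ∧
      (∀ X : C, G.map (F.map (𝟙 X)) ≫ ν X = ν X) ∧
      (∀ X : C, adj.unit X ≫ ν X = 𝟙 X)) ∧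
    (G.Separable ↔ ∃ γ : ∀ Y : D, Y ⟶ F.obj (G.obj Y),
      (∀ ⦃X Y : D⦄ (g : X ⟶ Y), g ≫ γ Y = γ X ≫ F.map (G.map g)) ∧
      (∀ Y : D, 𝟙 Y ≫ γ Y = γ Y) ∧
      (∀ Y : D, γ Y ≫ adj.counit Y = 𝟙 Y)) := by
  have FidF : ∀ X : C, F.map (𝟙 X) ≫ F.map (𝟙 X) = F.map (𝟙 X) := fun X => by
    rw [← F.map_comp, Category.comp_id]
  have GidG : ∀ Y : D, G.map (𝟙 Y) ≫ G.map (𝟙 Y) = G.map (𝟙 Y) := fun Y => by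
    rw [← G.map_comp, Category.comp_id]
  have FidF' : ∀ (X : C) {W : D} (x : F.obj X ⟶ W),
      F.map (𝟙 X) ≫ F.map (𝟙 X) ≫ x = F.map (𝟙 X) ≫ x := fun X _ x => by
    rw [← Category.assoc, FidF]
  have GidG' : ∀ (Y : D) {W : C} (x : G.obj Y ⟶ W),
      G.map (𝟙 Y) ≫ G.map (𝟙 Y) ≫ x = G.map (𝟙 Y) ≫ x := fun Y _ x => by
    rw [← Category.assoc, GidG]
  have cn' : ∀ {X' Y' : D} (g : X' ⟶ Y') {W : D} (x : Y' ⟶ W),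
      F.map (G.map g) ≫ adj.counit Y' ≫ x = adj.counit X' ≫ g ≫ x := by
    intro X' Y' g W x
    rw [← Category.assoc, adj.counit_natural, Category.assoc]
  have un' : ∀ {X' Y' : C} (f : X' ⟶ Y') {W : C} (x : G.obj (F.obj Y') ⟶ W),
      f ≫ adj.unit Y' ≫ x = adj.unit X' ≫ G.map (F.map f) ≫ x := by
    intro X' Y' f W x
    rw [← Category.assoc, adj.unit_natural, Category.assoc]
  have GFG' : ∀ (Y : D) {W : C} (x : G.obj (F.obj (G.obj Y)) ⟶ W),
      G.map (F.map (G.map (𝟙 Y))) ≫ G.map (F.map (G.map (𝟙 Y))) ≫ x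
        = G.map (F.map (G.map (𝟙 Y))) ≫ x := by
    intro Y W x
    rw [← Category.assoc, ← G.map_comp, ← F.map_comp, GidG]
  constructor
  · constructor
    · rintro ⟨P, hnat, hret⟩
      have habs : ∀ (X Y : C) (k : F.obj X ⟶ F.obj Y),
          P X Y (F.map (𝟙 X) ≫ k ≫ F.map (𝟙 Y)) = P X Y k := by
        intro X Y k
        have := hnat X X Y Y (𝟙 X) k (𝟙 Y)
        simpa using this
      set ν : ∀ X : C, G.obj (F.obj X) ⟶ X :=
        fun X => P (G.obj (F.obj X)) X (adj.counit (F.obj X)) with hν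
      have hnatν : ∀ ⦃X Y : C⦄ (f : X ⟶ Y), G.map (F.map f) ≫ ν Y = ν X ≫ f := by
        intro X Y f
        have h1 := hnat (G.obj (F.obj X)) (G.obj (F.obj Y)) Y Y
          (G.map (F.map f)) (adj.counit (F.obj Y)) (𝟙 Y)
        have h2 := hnat (G.obj (F.obj X)) (G.obj (F.obj X)) X Y
          (𝟙 (G.obj (F.obj X))) (adj.counit (F.obj X)) f
        -- common reduced form
        have key : P (G.obj (F.obj X)) Y
            (F.map (G.map (F.map f)) ≫ adj.counit (F.obj Y) ≫ F.map (𝟙 Y))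
            = P (G.obj (F.obj X)) Y
            (F.map (𝟙 (G.obj (F.obj X))) ≫ adj.counit (F.obj X) ≫ F.map f) := by
          rw [← habs, ← habs (k := F.map (𝟙 (G.obj (F.obj X))) ≫ adj.counit (F.obj X) ≫ F.map f)]
          congr 1
          simp only [Category.assoc, cn', FidF, FidF']
        calc G.map (F.map f) ≫ ν Y
            = G.map (F.map f) ≫ ν Y ≫ 𝟙 Y := by rw [Category.comp_id]
          _ = P (G.obj (F.obj X)) Y
              (F.map (G.map (F.map f)) ≫ adj.counit (F.obj Y) ≫ F.map (𝟙 Y)) := h1.symm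
          _ = P (G.obj (F.obj X)) Y
              (F.map (𝟙 (G.obj (F.obj X))) ≫ adj.counit (F.obj X) ≫ F.map f) := key
          _ = 𝟙 (G.obj (F.obj X)) ≫ ν X ≫ f := h2
          _ = ν X ≫ f := by rw [Category.id_comp]
      refine ⟨ν, hnatν, ?_, ?_⟩
      · intro X
        have := hnatν (𝟙 X)
        simpa using this
      · intro X
        have h := hnat X (G.obj (F.obj X)) X X (adj.unit X) (adj.counit (F.obj X)) (𝟙 X)
        have harg : F.map (adj.unit X) ≫ adj.counit (F.obj X) ≫ F.map (𝟙 X)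
            = F.map (𝟙 X) := by
          rw [← Category.assoc, adj.left_triangle, FidF]
        rw [harg, hret] at h
        simpa using h.symm
    · rintro ⟨ν, hnatν, hsemi, hsplit⟩
      refine ⟨fun X Y k => adj.unit X ≫ G.map k ≫ ν Y, ?_, ?_⟩
      · intro X Y Z T h k l
        show adj.unit X ≫ G.map (F.map h ≫ k ≫ F.map l) ≫ ν T
            = h ≫ (adj.unit Y ≫ G.map k ≫ ν Z) ≫ l
        rw [G.map_comp, G.map_comp]
        simp only [Category.assoc]
        calc adj.unit X ≫ G.map (F.map h) ≫ G.map k ≫ G.map (F.map l) ≫ ν T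
            = (adj.unit X ≫ G.map (F.map h)) ≫ G.map k ≫ (G.map (F.map l) ≫ ν T) := by
              simp only [Category.assoc]
          _ = (h ≫ adj.unit Y) ≫ G.map k ≫ (ν Z ≫ l) := by
              rw [← adj.unit_natural h, hnatν l]
          _ = h ≫ adj.unit Y ≫ G.map k ≫ ν Z ≫ l := by simp only [Category.assoc]
      · intro X Y f
        show adj.unit X ≫ G.map (F.map f) ≫ ν Y = f
        rw [hnatν f, ← Category.assoc, hsplit X, Category.id_comp]
  · constructor
    · rintro ⟨P, hnat, hret⟩
      have habs : ∀ (X Y : D) (k : G.obj X ⟶ G.obj Y),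
          P X Y (G.map (𝟙 X) ≫ k ≫ G.map (𝟙 Y)) = P X Y k := by
        intro X Y k
        have := hnat X X Y Y (𝟙 X) k (𝟙 Y)
        simpa using this
      set γ : ∀ Y : D, Y ⟶ F.obj (G.obj Y) :=
        fun Y => P Y (F.obj (G.obj Y)) (adj.unit (G.obj Y)) with hγ
      have hnatγ : ∀ ⦃X Y : D⦄ (g : X ⟶ Y), g ≫ γ Y = γ X ≫ F.map (G.map g) := by
        intro X Y g
        have h1 := hnat X Y (F.obj (G.obj Y)) (F.obj (G.obj Y))
          g (adj.unit (G.obj Y)) (𝟙 (F.obj (G.obj Y)))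
        have h2 := hnat X X (F.obj (G.obj X)) (F.obj (G.obj Y))
          (𝟙 X) (adj.unit (G.obj X)) (F.map (G.map g))
        have key : P X (F.obj (G.obj Y))
            (G.map g ≫ adj.unit (G.obj Y) ≫ G.map (𝟙 (F.obj (G.obj Y))))
            = P X (F.obj (G.obj Y))
            (G.map (𝟙 X) ≫ adj.unit (G.obj X) ≫ G.map (F.map (G.map g))) := by
          rw [← habs, ← habs (k := G.map (𝟙 X) ≫ adj.unit (G.obj X) ≫ G.map (F.map (G.map g)))]
          congr 1
          simp only [Category.assoc, un', GidG, GidG', GFG']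
        calc g ≫ γ Y
            = g ≫ γ Y ≫ 𝟙 (F.obj (G.obj Y)) := by rw [Category.comp_id]
          _ = P X (F.obj (G.obj Y))
              (G.map g ≫ adj.unit (G.obj Y) ≫ G.map (𝟙 (F.obj (G.obj Y)))) := h1.symm
          _ = P X (F.obj (G.obj Y))
              (G.map (𝟙 X) ≫ adj.unit (G.obj X) ≫ G.map (F.map (G.map g))) := key
          _ = 𝟙 X ≫ γ X ≫ F.map (G.map g) := h2
          _ = γ X ≫ F.map (G.map g) := by rw [Category.id_comp]
      refine ⟨γ, hnatγ, fun Y => Category.id_comp _, ?_⟩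
      · intro Y
        have h := hnat Y Y (F.obj (G.obj Y)) Y (𝟙 Y) (adj.unit (G.obj Y)) (adj.counit Y)
        have harg : G.map (𝟙 Y) ≫ adj.unit (G.obj Y) ≫ G.map (adj.counit Y)
            = G.map (𝟙 Y) := by
          rw [adj.right_triangle, GidG]
        rw [harg, hret] at h
        simpa using h.symm
    · rintro ⟨γ, hnatγ, hsemi, hsplit⟩
      refine ⟨fun X Y k => γ X ≫ F.map k ≫ adj.counit Y, ?_, ?_⟩
      · intro X Y Z T h k l
        show γ X ≫ F.map (G.map h ≫ k ≫ G.map l) ≫ adj.counit T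
            = h ≫ (γ Y ≫ F.map k ≫ adj.counit Z) ≫ l
        rw [F.map_comp, F.map_comp]
        simp only [Category.assoc]
        calc γ X ≫ F.map (G.map h) ≫ F.map k ≫ F.map (G.map l) ≫ adj.counit T
            = (γ X ≫ F.map (G.map h)) ≫ F.map k ≫ (F.map (G.map l) ≫ adj.counit T) := by
              simp only [Category.assoc]
          _ = (h ≫ γ Y) ≫ F.map k ≫ (adj.counit Z ≫ l) := by
              rw [← hnatγ h, adj.counit_natural l]
          _ = h ≫ γ Y ≫ F.map k ≫ adj.counit Z ≫ l := by simp only [Category.assoc]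
      · intro X Y f
        show γ X ≫ F.map (G.map f) ≫ adj.counit Y = f
        rw [← Category.assoc, ← hnatγ f, Category.assoc, hsplit Y, Category.comp_id]
end

section
/- Let e : Id_C → Id_C be an idempotent seminatural transformation on a category C and let E^e : C → C be the canonical semifunctor (identity on objects, f ↦ f ∘ e_X). Then E^e is a separable semifunctor if and only if e_X = Id_X for every object X of C. -/
open CategoryTheory

universe v₁ v₂ v₃ v₄ u₁ u₂ u₃ u₄

open Semifunctor

/-- The canonical semifunctor `E^e` attached to an idempotent seminatural
transformation `e : Id_C → Id_C` is separable iff `e_X = Id_X` for every `X`. -/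
theorem canonicalSemifunctor_separable_iff
    {C : Type u₁} [Category.{v₁} C] (e : ∀ X : C, X ⟶ X)
    (hnat : ∀ ⦃X Y : C⦄ (f : X ⟶ Y), f ≫ e Y = e X ≫ f)
    (hid : ∀ X : C, e X ≫ e X = e X) :
    (canonicalSemifunctor e hnat hid).Separable ↔ ∀ X : C, e X = 𝟙 X := by
  constructor
  · rintro ⟨P, hPnat, hPret⟩ X
    have key : ∀ k : X ⟶ X, P X X ((canonicalSemifunctor e hnat hid).map (𝟙 X) ≫ k ≫ (canonicalSemifunctor e hnat hid).map (𝟙 X)) = P X X k := by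
      intro k
      have := hPnat X X X X (𝟙 X) k (𝟙 X)
      simp at this
      exact this
    have key2 : ∀ k : X ⟶ X, P X X ((canonicalSemifunctor e hnat hid).map (𝟙 X) ≫ k ≫ (canonicalSemifunctor e hnat hid).map (𝟙 X)) = e X ≫ P X X k := by
      intro k
      have hmape : (canonicalSemifunctor e hnat hid).map (e X) = (canonicalSemifunctor e hnat hid).map (𝟙 X) := by
        show e X ≫ e X = e X ≫ 𝟙 X
        simp [hid]
      have := hPnat X X X X (e X) k (𝟙 X)
      rw [hmape] at this
      simp at this
      exact this
    have h1 : ∀ k : X ⟶ X, P X X k = e X ≫ P X X k := fun k => (key k).symm.trans (key2 k)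
    have h2 := h1 ((canonicalSemifunctor e hnat hid).map (𝟙 X))
    rw [hPret X X (𝟙 X)] at h2
    simpa using h2.symm
  · intro he
    refine ⟨fun X Y f => f, ?_, ?_⟩
    · intro X Y Z T h k l
      show (canonicalSemifunctor e hnat hid).map h ≫ k ≫ (canonicalSemifunctor e hnat hid).map l = h ≫ k ≫ l
      show (e X ≫ h) ≫ k ≫ (e Z ≫ l) = h ≫ k ≫ l
      rw [he X, he Z, Category.id_comp h]; erw [Category.id_comp l]
    · intro X Y f
      show e X ≫ f = f
      simp [he]
end

section
/- Let F : C → D be a semifunctor. Then F is semifully faithful if and only if F is both separable and naturally semifull. -/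
open CategoryTheory

universe v₁ v₂ v₃ v₄ u₁ u₂ u₃ u₄

open Semifunctor

/-- A semifunctor is semifully faithful iff it is separable and naturally semifull. -/
theorem semifullyFaithful_iff_separable_and_naturallySemifull
    {C : Type u₁} {D : Type u₂} [Category.{v₁} C] [Category.{v₂} D]
    (F : Semifunctor C D) :
    F.SemifullyFaithful ↔ F.Separable ∧ F.NaturallySemifull := by
  constructor
  · rintro ⟨hf, hsf⟩
    have hsf' : ∀ (X Y : C) (f : F.obj X ⟶ F.obj Y), ∃ g : X ⟶ Y,
        F.map g = F.map (𝟙 X) ≫ f ≫ F.map (𝟙 Y) := fun X Y f => hsf f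
    choose P hP using hsf'
    have hnat : F.IsHomNatural P := by
      intro X Y Z T h k l
      apply hf
      rw [F.map_comp, F.map_comp, hP, hP Y Z k]
      have h1 : F.map (𝟙 X) ≫ F.map h = F.map h := by rw [← F.map_comp]; simp
      have h2 : F.map l ≫ F.map (𝟙 T) = F.map l := by rw [← F.map_comp]; simp
      have h4 : F.map h ≫ F.map (𝟙 Y) = F.map h := by rw [← F.map_comp]; simp
      have h5 : F.map (𝟙 Z) ≫ F.map l = F.map l := by rw [← F.map_comp]; simp
      simp only [Category.assoc]
      rw [h2]
      conv_lhs => rw [← Category.assoc, h1]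
      conv_rhs => rw [← Category.assoc, h4]
      rw [h5]
    refine ⟨⟨P, hnat, fun X Y f => ?_⟩, ⟨P, hnat, hP⟩⟩
    apply hf
    rw [hP, ← F.map_comp, ← F.map_comp]
    simp
  · rintro ⟨⟨P, _, hret⟩, ⟨Q, _, hQ⟩⟩
    constructor
    · intro X Y f g h
      rw [← hret X Y f, ← hret X Y g, h]
    · intro X Y f
      exact ⟨Q X Y f, hQ X Y f⟩
end

section
/- (Rafael-type Theorem for naturally semifull semifunctors) Let F ⊣ₛ G : D → C be a semiadjunction of semifunctors with unit η and counit ε. Then: (1) F is naturally semifull if and only if there exists a seminatural transformation ν : GF → Id_C with η_X ∘ ν_X = GF(Id_X) for all objects X of C; (2) G is naturally semifull if and only if there exists a seminatural transformation γ : Id_D → FG with γ_D ∘ ε_D = FG(Id_D) for all objects D of D. -/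
open CategoryTheory

universe v₁ v₂ v₃ v₄ u₁ u₂ u₃ u₄

open Semifunctor

section RafaelAux

variable {C : Type u₁} {D : Type u₂} [Category.{v₁} C] [Category.{v₂} D]
variable {F : Semifunctor C D} {G : Semifunctor D C} (adj : Semiadjunction F G)

/-- Key identity: `F(𝟙_{GFX}) ≫ ε_{FX} = ε_{FX}`. -/
lemma rafael_key1 (X : C) :
    F.map (𝟙 (G.obj (F.obj X))) ≫ adj.counit (F.obj X) = adj.counit (F.obj X) := by
  calc F.map (𝟙 (G.obj (F.obj X))) ≫ adj.counit (F.obj X)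
      = (F.map (adj.unit (G.obj (F.obj X))) ≫ adj.counit (F.obj (G.obj (F.obj X)))) ≫
          adj.counit (F.obj X) := by rw [adj.left_triangle]
    _ = F.map (adj.unit (G.obj (F.obj X))) ≫
          (F.map (G.map (adj.counit (F.obj X))) ≫ adj.counit (F.obj X)) := by
        rw [Category.assoc, adj.counit_natural (adj.counit (F.obj X))]
    _ = F.map (adj.unit (G.obj (F.obj X)) ≫ G.map (adj.counit (F.obj X))) ≫
          adj.counit (F.obj X) := by rw [F.map_comp, Category.assoc]
    _ = F.map (G.map (𝟙 (F.obj X))) ≫ adj.counit (F.obj X) := by rw [adj.right_triangle]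
    _ = adj.counit (F.obj X) ≫ 𝟙 (F.obj X) := adj.counit_natural (𝟙 (F.obj X))
    _ = adj.counit (F.obj X) := Category.comp_id _

/-- Key identity: `η_{GY} ≫ G(𝟙_{FGY}) = η_{GY}`. -/
lemma rafael_key2 (Y : D) :
    adj.unit (G.obj Y) ≫ G.map (𝟙 (F.obj (G.obj Y))) = adj.unit (G.obj Y) := by
  calc adj.unit (G.obj Y) ≫ G.map (𝟙 (F.obj (G.obj Y)))
      = adj.unit (G.obj Y) ≫
          (adj.unit (G.obj (F.obj (G.obj Y))) ≫ G.map (adj.counit (F.obj (G.obj Y)))) := by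
        rw [adj.right_triangle]
    _ = (adj.unit (G.obj Y) ≫ adj.unit (G.obj (F.obj (G.obj Y)))) ≫
          G.map (adj.counit (F.obj (G.obj Y))) := by rw [Category.assoc]
    _ = (adj.unit (G.obj Y) ≫ G.map (F.map (adj.unit (G.obj Y)))) ≫
          G.map (adj.counit (F.obj (G.obj Y))) := by
        rw [← adj.unit_natural (adj.unit (G.obj Y))]
    _ = adj.unit (G.obj Y) ≫
          G.map (F.map (adj.unit (G.obj Y)) ≫ adj.counit (F.obj (G.obj Y))) := by
        rw [G.map_comp, Category.assoc]
    _ = adj.unit (G.obj Y) ≫ G.map (F.map (𝟙 (G.obj Y))) := by rw [adj.left_triangle]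
    _ = 𝟙 (G.obj Y) ≫ adj.unit (G.obj Y) := (adj.unit_natural (𝟙 (G.obj Y))).symm
    _ = adj.unit (G.obj Y) := Category.id_comp _

end RafaelAux

/-- Rafael-type Theorem for naturally semifull semifunctors: given a semiadjunction
`F ⊣ₛ G`, `F` is naturally semifull iff the unit is a natural semisplit-epi, and `G`
is naturally semifull iff the counit is a natural semisplit-mono. -/
theorem rafael_naturallySemifull_semifunctors
    {C : Type u₁} {D : Type u₂} [Category.{v₁} C] [Category.{v₂} D]
    {F : Semifunctor C D} {G : Semifunctor D C} (adj : Semiadjunction F G) :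
    (F.NaturallySemifull ↔ ∃ ν : ∀ X : C, G.obj (F.obj X) ⟶ X,
      (∀ ⦃X Y : C⦄ (f : X ⟶ Y), G.map (F.map f) ≫ ν Y = ν X ≫ f) ∧
      (∀ X : C, G.map (F.map (𝟙 X)) ≫ ν X = ν X) ∧
      (∀ X : C, ν X ≫ adj.unit X = G.map (F.map (𝟙 X)))) ∧
    (G.NaturallySemifull ↔ ∃ γ : ∀ Y : D, Y ⟶ F.obj (G.obj Y),
      (∀ ⦃X Y : D⦄ (g : X ⟶ Y), g ≫ γ Y = γ X ≫ F.map (G.map g)) ∧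
      (∀ Y : D, 𝟙 Y ≫ γ Y = γ Y) ∧
      (∀ Y : D, adj.counit Y ≫ γ Y = F.map (G.map (𝟙 Y)))) := by
  constructor
  · -- Part (1)
    constructor
    · rintro ⟨P, hP, hP2⟩
      refine ⟨fun X => P (G.obj (F.obj X)) X (adj.counit (F.obj X)), ?_, ?_, ?_⟩
      · intro X Y f
        have e1 : G.map (F.map f) ≫ P (G.obj (F.obj Y)) Y (adj.counit (F.obj Y))
            = P (G.obj (F.obj X)) Y (adj.counit (F.obj X) ≫ F.map f) := by
          calc G.map (F.map f) ≫ P (G.obj (F.obj Y)) Y (adj.counit (F.obj Y))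
              = G.map (F.map f) ≫ P (G.obj (F.obj Y)) Y (adj.counit (F.obj Y)) ≫ 𝟙 Y := by
                rw [Category.comp_id]
            _ = P (G.obj (F.obj X)) Y
                  (F.map (G.map (F.map f)) ≫ adj.counit (F.obj Y) ≫ F.map (𝟙 Y)) :=
                (hP _ _ _ _ _ _ _).symm
            _ = P (G.obj (F.obj X)) Y
                  ((adj.counit (F.obj X) ≫ F.map f) ≫ F.map (𝟙 Y)) := by
                rw [← Category.assoc, adj.counit_natural (F.map f)]
            _ = P (G.obj (F.obj X)) Y (adj.counit (F.obj X) ≫ F.map f) := by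
                rw [Category.assoc, ← F.map_comp, Category.comp_id]
        have e2 : P (G.obj (F.obj X)) X (adj.counit (F.obj X)) ≫ f
            = P (G.obj (F.obj X)) Y (adj.counit (F.obj X) ≫ F.map f) := by
          calc P (G.obj (F.obj X)) X (adj.counit (F.obj X)) ≫ f
              = 𝟙 (G.obj (F.obj X)) ≫ P (G.obj (F.obj X)) X (adj.counit (F.obj X)) ≫ f := by
                rw [Category.id_comp]
            _ = P (G.obj (F.obj X)) Y
                  (F.map (𝟙 (G.obj (F.obj X))) ≫ adj.counit (F.obj X) ≫ F.map f) :=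
                (hP _ _ _ _ _ _ _).symm
            _ = P (G.obj (F.obj X)) Y (adj.counit (F.obj X) ≫ F.map f) := by
                rw [← Category.assoc, rafael_key1 adj X]
        rw [e1, e2]
      · intro X
        have e1 : G.map (F.map (𝟙 X)) ≫ P (G.obj (F.obj X)) X (adj.counit (F.obj X))
            = P (G.obj (F.obj X)) X (adj.counit (F.obj X) ≫ F.map (𝟙 X)) := by
          calc G.map (F.map (𝟙 X)) ≫ P (G.obj (F.obj X)) X (adj.counit (F.obj X))
              = G.map (F.map (𝟙 X)) ≫ P (G.obj (F.obj X)) X (adj.counit (F.obj X)) ≫ 𝟙 X := by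
                rw [Category.comp_id]
            _ = P (G.obj (F.obj X)) X
                  (F.map (G.map (F.map (𝟙 X))) ≫ adj.counit (F.obj X) ≫ F.map (𝟙 X)) :=
                (hP _ _ _ _ _ _ _).symm
            _ = P (G.obj (F.obj X)) X
                  ((adj.counit (F.obj X) ≫ F.map (𝟙 X)) ≫ F.map (𝟙 X)) := by
                rw [← Category.assoc, adj.counit_natural (F.map (𝟙 X))]
            _ = P (G.obj (F.obj X)) X (adj.counit (F.obj X) ≫ F.map (𝟙 X)) := by
                rw [Category.assoc, ← F.map_comp, Category.comp_id]
        have e2 : P (G.obj (F.obj X)) X (adj.counit (F.obj X))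
            = P (G.obj (F.obj X)) X (adj.counit (F.obj X) ≫ F.map (𝟙 X)) := by
          calc P (G.obj (F.obj X)) X (adj.counit (F.obj X))
              = 𝟙 (G.obj (F.obj X)) ≫ P (G.obj (F.obj X)) X (adj.counit (F.obj X)) ≫ 𝟙 X := by
                rw [Category.id_comp, Category.comp_id]
            _ = P (G.obj (F.obj X)) X
                  (F.map (𝟙 (G.obj (F.obj X))) ≫ adj.counit (F.obj X) ≫ F.map (𝟙 X)) :=
                (hP _ _ _ _ _ _ _).symm
            _ = P (G.obj (F.obj X)) X (adj.counit (F.obj X) ≫ F.map (𝟙 X)) := by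
                rw [← Category.assoc, rafael_key1 adj X]
        rw [e1, ← e2]
      · intro X
        calc P (G.obj (F.obj X)) X (adj.counit (F.obj X)) ≫ adj.unit X
            = adj.unit (G.obj (F.obj X)) ≫
                G.map (F.map (P (G.obj (F.obj X)) X (adj.counit (F.obj X)))) :=
              adj.unit_natural _
          _ = adj.unit (G.obj (F.obj X)) ≫
                G.map (F.map (𝟙 (G.obj (F.obj X))) ≫ adj.counit (F.obj X) ≫ F.map (𝟙 X)) := by
              rw [hP2]
          _ = (adj.unit (G.obj (F.obj X)) ≫ G.map (F.map (𝟙 (G.obj (F.obj X))))) ≫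
                G.map (adj.counit (F.obj X)) ≫ G.map (F.map (𝟙 X)) := by
              rw [G.map_comp, G.map_comp]; simp only [Category.assoc]
          _ = (𝟙 (G.obj (F.obj X)) ≫ adj.unit (G.obj (F.obj X))) ≫
                G.map (adj.counit (F.obj X)) ≫ G.map (F.map (𝟙 X)) := by
              rw [adj.unit_natural (𝟙 (G.obj (F.obj X)))]
          _ = (adj.unit (G.obj (F.obj X)) ≫ G.map (adj.counit (F.obj X))) ≫
                G.map (F.map (𝟙 X)) := by
              rw [Category.id_comp, Category.assoc]
          _ = G.map (𝟙 (F.obj X)) ≫ G.map (F.map (𝟙 X)) := by rw [adj.right_triangle]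
          _ = G.map (F.map (𝟙 X)) := by rw [← G.map_comp, Category.id_comp]
    · rintro ⟨ν, hnat, hsemi, hsplit⟩
      have hFν : ∀ Y : C, F.map (ν Y) = adj.counit (F.obj Y) ≫ F.map (𝟙 Y) := by
        intro Y
        calc F.map (ν Y)
            = F.map (ν Y ≫ 𝟙 Y) := by rw [Category.comp_id]
          _ = F.map (ν Y) ≫ F.map (𝟙 Y) := F.map_comp _ _
          _ = F.map (ν Y) ≫ F.map (adj.unit Y) ≫ adj.counit (F.obj Y) := by
              rw [adj.left_triangle]
          _ = F.map (ν Y ≫ adj.unit Y) ≫ adj.counit (F.obj Y) := by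
              rw [F.map_comp, Category.assoc]
          _ = F.map (G.map (F.map (𝟙 Y))) ≫ adj.counit (F.obj Y) := by rw [hsplit]
          _ = adj.counit (F.obj Y) ≫ F.map (𝟙 Y) := adj.counit_natural (F.map (𝟙 Y))
      refine ⟨fun X Y f => adj.unit X ≫ G.map f ≫ ν Y, ?_, ?_⟩
      · intro X Y Z T h k l
        calc adj.unit X ≫ G.map (F.map h ≫ k ≫ F.map l) ≫ ν T
            = (adj.unit X ≫ G.map (F.map h)) ≫ G.map k ≫ G.map (F.map l) ≫ ν T := by
              rw [G.map_comp, G.map_comp]; simp only [Category.assoc]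
          _ = (h ≫ adj.unit Y) ≫ G.map k ≫ ν Z ≫ l := by
              rw [← adj.unit_natural h, hnat l]
          _ = h ≫ (adj.unit Y ≫ G.map k ≫ ν Z) ≫ l := by simp only [Category.assoc]
      · intro X Y f
        calc F.map (adj.unit X ≫ G.map f ≫ ν Y)
            = F.map (adj.unit X) ≫ F.map (G.map f) ≫ F.map (ν Y) := by
              rw [F.map_comp, F.map_comp]
          _ = F.map (adj.unit X) ≫ (F.map (G.map f) ≫ adj.counit (F.obj Y)) ≫
                F.map (𝟙 Y) := by rw [hFν, Category.assoc]
          _ = (F.map (adj.unit X) ≫ adj.counit (F.obj X)) ≫ f ≫ F.map (𝟙 Y) := by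
              rw [adj.counit_natural f]; simp only [Category.assoc]
          _ = F.map (𝟙 X) ≫ f ≫ F.map (𝟙 Y) := by rw [adj.left_triangle]
  · -- Part (2)
    constructor
    · rintro ⟨P, hP, hP2⟩
      refine ⟨fun Y => P Y (F.obj (G.obj Y)) (adj.unit (G.obj Y)), ?_, ?_, ?_⟩
      · intro X Y g
        have e1 : g ≫ P Y (F.obj (G.obj Y)) (adj.unit (G.obj Y))
            = P X (F.obj (G.obj Y)) (G.map g ≫ adj.unit (G.obj Y)) := by
          calc g ≫ P Y (F.obj (G.obj Y)) (adj.unit (G.obj Y))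
              = g ≫ P Y (F.obj (G.obj Y)) (adj.unit (G.obj Y)) ≫ 𝟙 (F.obj (G.obj Y)) := by
                rw [Category.comp_id]
            _ = P X (F.obj (G.obj Y))
                  (G.map g ≫ adj.unit (G.obj Y) ≫ G.map (𝟙 (F.obj (G.obj Y)))) :=
                (hP _ _ _ _ _ _ _).symm
            _ = P X (F.obj (G.obj Y)) (G.map g ≫ adj.unit (G.obj Y)) := by
                rw [rafael_key2 adj Y]
        have e2 : P X (F.obj (G.obj X)) (adj.unit (G.obj X)) ≫ F.map (G.map g)
            = P X (F.obj (G.obj Y)) (G.map g ≫ adj.unit (G.obj Y)) := by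
          calc P X (F.obj (G.obj X)) (adj.unit (G.obj X)) ≫ F.map (G.map g)
              = 𝟙 X ≫ P X (F.obj (G.obj X)) (adj.unit (G.obj X)) ≫ F.map (G.map g) := by
                rw [Category.id_comp]
            _ = P X (F.obj (G.obj Y))
                  (G.map (𝟙 X) ≫ adj.unit (G.obj X) ≫ G.map (F.map (G.map g))) :=
                (hP _ _ _ _ _ _ _).symm
            _ = P X (F.obj (G.obj Y))
                  (G.map (𝟙 X) ≫ G.map g ≫ adj.unit (G.obj Y)) := by
                rw [← adj.unit_natural (G.map g)]
            _ = P X (F.obj (G.obj Y)) (G.map g ≫ adj.unit (G.obj Y)) := by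
                rw [← Category.assoc, ← G.map_comp, Category.id_comp]
        rw [e1, e2]
      · intro Y
        exact Category.id_comp _
      · intro Y
        calc adj.counit Y ≫ P Y (F.obj (G.obj Y)) (adj.unit (G.obj Y))
            = F.map (G.map (P Y (F.obj (G.obj Y)) (adj.unit (G.obj Y)))) ≫
                adj.counit (F.obj (G.obj Y)) :=
              (adj.counit_natural _).symm
          _ = F.map (G.map (𝟙 Y) ≫ adj.unit (G.obj Y) ≫ G.map (𝟙 (F.obj (G.obj Y)))) ≫
                adj.counit (F.obj (G.obj Y)) := by rw [hP2]
          _ = F.map (G.map (𝟙 Y) ≫ adj.unit (G.obj Y)) ≫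
                adj.counit (F.obj (G.obj Y)) := by rw [rafael_key2 adj Y]
          _ = F.map (G.map (𝟙 Y)) ≫ F.map (adj.unit (G.obj Y)) ≫
                adj.counit (F.obj (G.obj Y)) := by rw [F.map_comp, Category.assoc]
          _ = F.map (G.map (𝟙 Y)) ≫ F.map (𝟙 (G.obj Y)) := by rw [adj.left_triangle]
          _ = F.map (G.map (𝟙 Y)) := by rw [← F.map_comp, Category.comp_id]
    · rintro ⟨γ, hnat, _, hsplit⟩
      have hGγ : ∀ Y : D, G.map (γ Y) = G.map (𝟙 Y) ≫ adj.unit (G.obj Y) := by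
        intro Y
        calc G.map (γ Y)
            = G.map (𝟙 Y ≫ γ Y) := by rw [Category.id_comp]
          _ = G.map (𝟙 Y) ≫ G.map (γ Y) := G.map_comp _ _
          _ = (adj.unit (G.obj Y) ≫ G.map (adj.counit Y)) ≫ G.map (γ Y) := by
              rw [adj.right_triangle]
          _ = adj.unit (G.obj Y) ≫ G.map (adj.counit Y ≫ γ Y) := by
              rw [G.map_comp, Category.assoc]
          _ = adj.unit (G.obj Y) ≫ G.map (F.map (G.map (𝟙 Y))) := by rw [hsplit]
          _ = G.map (𝟙 Y) ≫ adj.unit (G.obj Y) := (adj.unit_natural (G.map (𝟙 Y))).symm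
      refine ⟨fun X Y k => γ X ≫ F.map k ≫ adj.counit Y, ?_, ?_⟩
      · intro X Y Z T h k l
        calc γ X ≫ F.map (G.map h ≫ k ≫ G.map l) ≫ adj.counit T
            = (γ X ≫ F.map (G.map h)) ≫ F.map k ≫ F.map (G.map l) ≫ adj.counit T := by
              rw [F.map_comp, F.map_comp]; simp only [Category.assoc]
          _ = (h ≫ γ Y) ≫ F.map k ≫ adj.counit Z ≫ l := by
              rw [← hnat h, adj.counit_natural l]
          _ = h ≫ (γ Y ≫ F.map k ≫ adj.counit Z) ≫ l := by simp only [Category.assoc]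
      · intro X Y k
        calc G.map (γ X ≫ F.map k ≫ adj.counit Y)
            = G.map (γ X) ≫ G.map (F.map k) ≫ G.map (adj.counit Y) := by
              rw [G.map_comp, G.map_comp]
          _ = G.map (𝟙 X) ≫ (adj.unit (G.obj X) ≫ G.map (F.map k)) ≫
                G.map (adj.counit Y) := by rw [hGγ]; simp only [Category.assoc]
          _ = G.map (𝟙 X) ≫ k ≫ adj.unit (G.obj Y) ≫ G.map (adj.counit Y) := by
              rw [← adj.unit_natural k]; simp only [Category.assoc]
          _ = G.map (𝟙 X) ≫ k ≫ G.map (𝟙 Y) := by rw [adj.right_triangle]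
end

section
/- Let F : C → D be a semifunctor. Then: (i) F is separable if and only if F is semiseparable and faithful; (ii) F is naturally semifull if and only if F is semiseparable and semifull. -/
open CategoryTheory

universe v₁ v₂ v₃ v₄ u₁ u₂ u₃ u₄

open Semifunctor

/-- (i) A semifunctor is separable iff it is semiseparable and faithful;
(ii) it is naturally semifull iff it is semiseparable and semifull. -/
theorem separable_and_naturallySemifull_via_semiseparable
    {C : Type u₁} {D : Type u₂} [Category.{v₁} C] [Category.{v₂} D]
    (F : Semifunctor C D) :
    (F.Separable ↔ F.Semiseparable ∧ F.Faithful) ∧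
    (F.NaturallySemifull ↔ F.Semiseparable ∧ F.Semifull) := by
  constructor
  · constructor
    · rintro ⟨P, hnat, hret⟩
      exact ⟨⟨P, hnat, fun X Y f => by rw [hret]⟩,
        fun X Y f g h => by rw [← hret X Y f, ← hret X Y g, h]⟩
    · rintro ⟨⟨P, hnat, hss⟩, hf⟩
      exact ⟨P, hnat, fun X Y f => hf _ _ (hss X Y f)⟩
  · constructor
    · rintro ⟨P, hnat, hns⟩
      refine ⟨⟨P, hnat, fun X Y f => ?_⟩, fun X Y f => ⟨P X Y f, hns X Y f⟩⟩
      rw [hns, ← F.map_comp, ← F.map_comp, Category.id_comp, Category.comp_id]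
    · rintro ⟨⟨P, hnat, hss⟩, hsf⟩
      refine ⟨P, hnat, fun X Y f => ?_⟩
      obtain ⟨g, hg⟩ := hsf f
      have e : P X Y f = P X Y (F.map g) := by
        rw [hg, hnat X X Y Y (𝟙 X) f (𝟙 Y), Category.id_comp, Category.comp_id]
      rw [e, hss, hg]
end

section
/- Let F : C → D be a semiseparable semifunctor. Then there is a unique idempotent natural transformation e : Id_C → Id_C such that F(e_X) = F(Id_X) for all X and with the universal property: for morphisms f, g : X → Y in C, F(f) = F(g) if and only if e_Y ∘ f = e_Y ∘ g. Moreover, e_X = Id_X for all X if and only if F is separable. -/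
open CategoryTheory

universe v₁ v₂ v₃ v₄ u₁ u₂ u₃ u₄

open Semifunctor

/-- A semiseparable semifunctor has a unique associated idempotent natural
transformation `e : Id_C → Id_C` with `F(e_X) = F(Id_X)` and the universal property
`F(f) = F(g) ↔ e_Y ∘ f = e_Y ∘ g`; moreover `e = Id` iff `F` is separable. -/
theorem semiseparable_associated_idempotent
    {C : Type u₁} {D : Type u₂} [Category.{v₁} C] [Category.{v₂} D]
    (F : Semifunctor C D) (hF : F.Semiseparable) :
    (∃! e : ∀ X : C, X ⟶ X,
      (∀ ⦃X Y : C⦄ (f : X ⟶ Y), f ≫ e Y = e X ≫ f) ∧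
      (∀ X : C, e X ≫ e X = e X) ∧
      (∀ X : C, F.map (e X) = F.map (𝟙 X)) ∧
      (∀ (X Y : C) (f g : X ⟶ Y), F.map f = F.map g ↔ f ≫ e Y = g ≫ e Y)) ∧
    (∀ e : ∀ X : C, X ⟶ X,
      ((∀ ⦃X Y : C⦄ (f : X ⟶ Y), f ≫ e Y = e X ≫ f) ∧
       (∀ X : C, e X ≫ e X = e X) ∧
       (∀ X : C, F.map (e X) = F.map (𝟙 X)) ∧
       (∀ (X Y : C) (f g : X ⟶ Y), F.map f = F.map g ↔ f ≫ e Y = g ≫ e Y)) →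
      ((∀ X : C, e X = 𝟙 X) ↔ F.Separable)) := by
  obtain ⟨P, hPnat, hPsemi⟩ := hF
  set e : ∀ X : C, X ⟶ X := fun X => P X X (F.map (𝟙 X)) with he
  have hPF1 : ∀ (X Y : C) (f : X ⟶ Y), P X Y (F.map f) = f ≫ e Y := by
    intro X Y f
    have h := hPnat X Y Y Y f (F.map (𝟙 Y)) (𝟙 Y)
    simpa [← F.map_comp] using h
  have hPF2 : ∀ (X Y : C) (f : X ⟶ Y), P X Y (F.map f) = e X ≫ f := by
    intro X Y f
    have h := hPnat X X X Y (𝟙 X) (F.map (𝟙 X)) f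
    simpa [← F.map_comp] using h
  have hnat : ∀ ⦃X Y : C⦄ (f : X ⟶ Y), f ≫ e Y = e X ≫ f := by
    intro X Y f; rw [← hPF1, hPF2]
  have hFe : ∀ X : C, F.map (e X) = F.map (𝟙 X) := fun X => hPsemi X X (𝟙 X)
  have hid : ∀ X : C, e X ≫ e X = e X := by
    intro X
    have h := hPF1 X X (e X)
    rw [hFe] at h
    exact h.symm
  have huniv : ∀ (X Y : C) (f g : X ⟶ Y), F.map f = F.map g ↔ f ≫ e Y = g ≫ e Y := by
    intro X Y f g
    constructor
    · intro h; rw [← hPF1, ← hPF1, h]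
    · intro h
      have h2 : F.map (f ≫ e Y) = F.map (g ≫ e Y) := by rw [h]
      rw [F.map_comp, F.map_comp, hFe, ← F.map_comp, ← F.map_comp,
        Category.comp_id, Category.comp_id] at h2
      exact h2
  have huniq : ∀ e' : ∀ X : C, X ⟶ X,
      ((∀ ⦃X Y : C⦄ (f : X ⟶ Y), f ≫ e' Y = e' X ≫ f) ∧
       (∀ X : C, e' X ≫ e' X = e' X) ∧
       (∀ X : C, F.map (e' X) = F.map (𝟙 X)) ∧
       (∀ (X Y : C) (f g : X ⟶ Y), F.map f = F.map g ↔ f ≫ e' Y = g ≫ e' Y)) →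
      ∀ X : C, e' X = e X := by
    rintro e' ⟨hnat', hid', hFe', huniv'⟩ X
    have h1 : e' X ≫ e X = e X := by
      have hh : F.map (e' X) = F.map (e X) := by rw [hFe', hFe]
      have hh2 := (huniv X X (e' X) (e X)).mp hh
      rw [hid X] at hh2; exact hh2
    have h2 : e X ≫ e' X = e' X := by
      have hh : F.map (e X) = F.map (e' X) := by rw [hFe', hFe]
      have hh2 := (huniv' X X (e X) (e' X)).mp hh
      rw [hid' X] at hh2; exact hh2
    calc e' X = e X ≫ e' X := h2.symm
      _ = e' X ≫ e X := (hnat (e' X)).symm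
      _ = e X := h1
  constructor
  · exact ⟨e, ⟨hnat, hid, hFe, huniv⟩, fun e' h => funext (huniq e' h)⟩
  · rintro e'' hprops
    constructor
    · intro hone
      refine ⟨P, hPnat, ?_⟩
      intro X Y f
      have hE : e Y = 𝟙 Y := (huniq e'' hprops Y) ▸ hone Y
      rw [hPF1, hE, Category.comp_id]
    · rintro ⟨Q, hQnat, hQ⟩ X
      obtain ⟨_, _, hFe'', _⟩ := hprops
      have h1 : Q X X (F.map (e'' X)) = e'' X := hQ X X (e'' X)
      rw [hFe''] at h1
      rw [← h1, hQ X X (𝟙 X)]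
end

section
/- (Rafael-type Theorem for semiseparable semifunctors) Let F ⊣ₛ G : D → C be a semiadjunction of semifunctors with unit η and counit ε. Then: (1) F is semiseparable if and only if there exists a natural transformation ν : GF → Id_C satisfying η_X ∘ ν_X ∘ η_X = η_X for all X (equivalently, F(ν_X) ∘ F(η_X) = F(Id_X) for all X); (2) G is semiseparable if and only if there exists a natural transformation γ : Id_D → FG satisfying ε_D ∘ γ_D ∘ ε_D = ε_D for all D (equivalently, G(ε_D) ∘ G(γ_D) = G(Id_D) for all D). -/
open CategoryTheory

universe v₁ v₂ v₃ v₄ u₁ u₂ u₃ u₄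

open Semifunctor

/-- Rafael-type Theorem for semiseparable semifunctors: `F` is semiseparable iff there
is a natural `ν : GF → Id_C` with `η ∘ ν ∘ η = η` (equivalently `F(ν) ∘ F(η) = F(Id)`),
and `G` is semiseparable iff there is a natural `γ : Id_D → FG` with
`ε ∘ γ ∘ ε = ε` (equivalently `G(ε) ∘ G(γ) = G(Id)`). -/
theorem rafael_semiseparable_semifunctors
    {C : Type u₁} {D : Type u₂} [Category.{v₁} C] [Category.{v₂} D]
    {F : Semifunctor C D} {G : Semifunctor D C} (adj : Semiadjunction F G) :
    (F.Semiseparable ↔ ∃ ν : ∀ X : C, G.obj (F.obj X) ⟶ X,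
      (∀ ⦃X Y : C⦄ (f : X ⟶ Y), G.map (F.map f) ≫ ν Y = ν X ≫ f) ∧
      (∀ X : C, adj.unit X ≫ ν X ≫ adj.unit X = adj.unit X)) ∧
    (∀ ν : ∀ X : C, G.obj (F.obj X) ⟶ X,
      (∀ ⦃X Y : C⦄ (f : X ⟶ Y), G.map (F.map f) ≫ ν Y = ν X ≫ f) →
      ((∀ X : C, adj.unit X ≫ ν X ≫ adj.unit X = adj.unit X) ↔
       (∀ X : C, F.map (adj.unit X) ≫ F.map (ν X) = F.map (𝟙 X)))) ∧
    (G.Semiseparable ↔ ∃ γ : ∀ Y : D, Y ⟶ F.obj (G.obj Y),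
      (∀ ⦃X Y : D⦄ (g : X ⟶ Y), g ≫ γ Y = γ X ≫ F.map (G.map g)) ∧
      (∀ Y : D, adj.counit Y ≫ γ Y ≫ adj.counit Y = adj.counit Y)) ∧
    (∀ γ : ∀ Y : D, Y ⟶ F.obj (G.obj Y),
      (∀ ⦃X Y : D⦄ (g : X ⟶ Y), g ≫ γ Y = γ X ≫ F.map (G.map g)) →
      ((∀ Y : D, adj.counit Y ≫ γ Y ≫ adj.counit Y = adj.counit Y) ↔
       (∀ Y : D, G.map (γ Y) ≫ G.map (adj.counit Y) = G.map (𝟙 Y)))) := by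

  have part2 : ∀ ν : ∀ X : C, G.obj (F.obj X) ⟶ X,
      (∀ ⦃X Y : C⦄ (f : X ⟶ Y), G.map (F.map f) ≫ ν Y = ν X ≫ f) →
      ((∀ X : C, adj.unit X ≫ ν X ≫ adj.unit X = adj.unit X) ↔
       (∀ X : C, F.map (adj.unit X) ≫ F.map (ν X) = F.map (𝟙 X))) := by
    intro ν hν
    constructor
    · intro h X
      calc F.map (adj.unit X) ≫ F.map (ν X)
          = F.map (adj.unit X ≫ ν X) := (F.map_comp _ _).symm
        _ = F.map (adj.unit X ≫ ν X) ≫ F.map (𝟙 X) := by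
              rw [← F.map_comp, Category.comp_id]
        _ = F.map (adj.unit X ≫ ν X) ≫ F.map (adj.unit X) ≫ adj.counit (F.obj X) := by
              rw [adj.left_triangle]
        _ = F.map ((adj.unit X ≫ ν X) ≫ adj.unit X) ≫ adj.counit (F.obj X) := by
              rw [F.map_comp (adj.unit X ≫ ν X) (adj.unit X), Category.assoc]
        _ = F.map (adj.unit X) ≫ adj.counit (F.obj X) := by
              rw [Category.assoc, h X]
        _ = F.map (𝟙 X) := adj.left_triangle X
    · intro h X
      have h1 : ν X ≫ adj.unit X
          = adj.unit (G.obj (F.obj X)) ≫ G.map (F.map (ν X)) := adj.unit_natural (ν X)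
      have h2 : adj.unit X ≫ adj.unit (G.obj (F.obj X))
          = adj.unit X ≫ G.map (F.map (adj.unit X)) := adj.unit_natural (adj.unit X)
      have h3 : adj.unit X ≫ G.map (F.map (𝟙 X)) = adj.unit X := by
        rw [← adj.unit_natural (𝟙 X), Category.id_comp]
      calc adj.unit X ≫ ν X ≫ adj.unit X
          = adj.unit X ≫ adj.unit (G.obj (F.obj X)) ≫ G.map (F.map (ν X)) := by rw [h1]
        _ = (adj.unit X ≫ G.map (F.map (adj.unit X))) ≫ G.map (F.map (ν X)) := by
              rw [← Category.assoc, h2]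
        _ = adj.unit X ≫ G.map (F.map (adj.unit X) ≫ F.map (ν X)) := by
              rw [Category.assoc, ← G.map_comp]
        _ = adj.unit X := by rw [h X, h3]
  have part4 : ∀ γ : ∀ Y : D, Y ⟶ F.obj (G.obj Y),
      (∀ ⦃X Y : D⦄ (g : X ⟶ Y), g ≫ γ Y = γ X ≫ F.map (G.map g)) →
      ((∀ Y : D, adj.counit Y ≫ γ Y ≫ adj.counit Y = adj.counit Y) ↔
       (∀ Y : D, G.map (γ Y) ≫ G.map (adj.counit Y) = G.map (𝟙 Y))) := by
    intro γ hγ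
    constructor
    · intro h Y
      calc G.map (γ Y) ≫ G.map (adj.counit Y)
          = G.map (γ Y ≫ adj.counit Y) := (G.map_comp _ _).symm
        _ = G.map (𝟙 Y) ≫ G.map (γ Y ≫ adj.counit Y) := by
              rw [← G.map_comp, Category.id_comp]
        _ = (adj.unit (G.obj Y) ≫ G.map (adj.counit Y)) ≫ G.map (γ Y ≫ adj.counit Y) := by
              rw [adj.right_triangle]
        _ = adj.unit (G.obj Y) ≫ G.map (adj.counit Y ≫ γ Y ≫ adj.counit Y) := by
              rw [Category.assoc, ← G.map_comp]
        _ = adj.unit (G.obj Y) ≫ G.map (adj.counit Y) := by rw [h Y]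
        _ = G.map (𝟙 Y) := adj.right_triangle Y
    · intro h Y
      have h1 : adj.counit Y ≫ γ Y
          = F.map (G.map (γ Y)) ≫ adj.counit (F.obj (G.obj Y)) :=
        (adj.counit_natural (γ Y)).symm
      have h2 : adj.counit (F.obj (G.obj Y)) ≫ adj.counit Y
          = F.map (G.map (adj.counit Y)) ≫ adj.counit Y := by
        rw [adj.counit_natural (adj.counit Y)]
      have h3 : F.map (G.map (𝟙 Y)) ≫ adj.counit Y = adj.counit Y := by
        rw [adj.counit_natural (𝟙 Y), Category.comp_id]
      calc adj.counit Y ≫ γ Y ≫ adj.counit Y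
          = (adj.counit Y ≫ γ Y) ≫ adj.counit Y := (Category.assoc _ _ _).symm
        _ = F.map (G.map (γ Y)) ≫ adj.counit (F.obj (G.obj Y)) ≫ adj.counit Y := by
              rw [h1, Category.assoc]
        _ = F.map (G.map (γ Y)) ≫ F.map (G.map (adj.counit Y)) ≫ adj.counit Y := by
              rw [h2]
        _ = F.map (G.map (γ Y) ≫ G.map (adj.counit Y)) ≫ adj.counit Y := by
              rw [F.map_comp, Category.assoc]
        _ = adj.counit Y := by rw [h Y, h3]
  refine ⟨?_, part2, ?_, part4⟩
  · -- F semiseparable iff ...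
    constructor
    · rintro ⟨P, hP, hPF⟩
      have hPid : ∀ (X Y : C) (k : F.obj X ⟶ F.obj Y),
          P X Y (F.map (𝟙 X) ≫ k ≫ F.map (𝟙 Y)) = P X Y k := by
        intro X Y k
        rw [hP X X Y Y (𝟙 X) k (𝟙 Y), Category.id_comp, Category.comp_id]
      refine ⟨fun X => P (G.obj (F.obj X)) X (adj.counit (F.obj X)), ?_, ?_⟩
      · intro X Y f
        have e1 : G.map (F.map f) ≫ P (G.obj (F.obj Y)) Y (adj.counit (F.obj Y))
            = P (G.obj (F.obj X)) Y
                (F.map (G.map (F.map f)) ≫ adj.counit (F.obj Y) ≫ F.map (𝟙 Y)) := by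
          rw [hP, Category.comp_id]
        have e2 : P (G.obj (F.obj X)) X (adj.counit (F.obj X)) ≫ f
            = P (G.obj (F.obj X)) Y
                (F.map (𝟙 (G.obj (F.obj X))) ≫ adj.counit (F.obj X) ≫ F.map f) := by
          rw [hP, Category.id_comp]
        have a1 : F.map (G.map (F.map f)) ≫ adj.counit (F.obj Y) ≫ F.map (𝟙 Y)
            = adj.counit (F.obj X) ≫ F.map f := by
          rw [← Category.assoc, adj.counit_natural (F.map f), Category.assoc,
            ← F.map_comp, Category.comp_id]
        have a2 : F.map (𝟙 (G.obj (F.obj X))) ≫ adj.counit (F.obj X) ≫ F.map f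
            = F.map (𝟙 (G.obj (F.obj X))) ≫ (adj.counit (F.obj X) ≫ F.map f)
                ≫ F.map (𝟙 Y) := by
          rw [Category.assoc, ← F.map_comp, Category.comp_id]
        rw [e1, e2, a1, a2, hPid]
      · intro X
        have c1 : adj.unit X ≫ P (G.obj (F.obj X)) X (adj.counit (F.obj X))
            = P X X (F.map (𝟙 X)) := by
          have := hP X (G.obj (F.obj X)) X X (adj.unit X) (adj.counit (F.obj X)) (𝟙 X)
          rw [Category.comp_id] at this
          rw [← this]
          congr 1
          rw [← Category.assoc, adj.left_triangle, ← F.map_comp, Category.comp_id]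
        have c2 : P X X (F.map (𝟙 X)) ≫ adj.unit X = adj.unit X := by
          rw [adj.unit_natural (P X X (F.map (𝟙 X))), hPF,
            ← adj.unit_natural (𝟙 X), Category.id_comp]
        rw [← Category.assoc, c1, c2]
    · rintro ⟨ν, hν, hc⟩
      have hF := (part2 ν hν).mp hc
      refine ⟨fun X Y k => adj.unit X ≫ G.map k ≫ ν Y, ?_, ?_⟩
      · intro X Y Z T h k l
        calc adj.unit X ≫ G.map (F.map h ≫ k ≫ F.map l) ≫ ν T
            = adj.unit X ≫ (G.map (F.map h) ≫ G.map k ≫ G.map (F.map l)) ≫ ν T := by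
              rw [G.map_comp, G.map_comp]
          _ = (adj.unit X ≫ G.map (F.map h)) ≫ G.map k ≫ (G.map (F.map l) ≫ ν T) := by
              simp only [Category.assoc]
          _ = (h ≫ adj.unit Y) ≫ G.map k ≫ (ν Z ≫ l) := by
              rw [← adj.unit_natural h, hν l]
          _ = h ≫ (adj.unit Y ≫ G.map k ≫ ν Z) ≫ l := by
              simp only [Category.assoc]
      · intro X Y f
        have e1 : adj.unit X ≫ G.map (F.map f) ≫ ν Y = adj.unit X ≫ ν X ≫ f := by
          rw [hν f]
        show F.map (adj.unit X ≫ G.map (F.map f) ≫ ν Y) = F.map f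
        rw [e1]
        calc F.map (adj.unit X ≫ ν X ≫ f)
            = (F.map (adj.unit X) ≫ F.map (ν X)) ≫ F.map f := by
              rw [F.map_comp, F.map_comp, Category.assoc]
          _ = F.map (𝟙 X) ≫ F.map f := by rw [hF X]
          _ = F.map f := by rw [← F.map_comp, Category.id_comp]
  · -- G semiseparable iff ...
    constructor
    · rintro ⟨Q, hQ, hQG⟩
      have hQid : ∀ (X Y : D) (k : G.obj X ⟶ G.obj Y),
          Q X Y (G.map (𝟙 X) ≫ k ≫ G.map (𝟙 Y)) = Q X Y k := by
        intro X Y k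
        rw [hQ X X Y Y (𝟙 X) k (𝟙 Y), Category.id_comp, Category.comp_id]
      refine ⟨fun Y => Q Y (F.obj (G.obj Y)) (adj.unit (G.obj Y)), ?_, ?_⟩
      · intro X Y g
        have e1 : g ≫ Q Y (F.obj (G.obj Y)) (adj.unit (G.obj Y))
            = Q X (F.obj (G.obj Y))
                (G.map g ≫ adj.unit (G.obj Y) ≫ G.map (𝟙 (F.obj (G.obj Y)))) := by
          rw [hQ, Category.comp_id]
        have e2 : Q X (F.obj (G.obj X)) (adj.unit (G.obj X)) ≫ F.map (G.map g)
            = Q X (F.obj (G.obj Y))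
                (G.map (𝟙 X) ≫ adj.unit (G.obj X) ≫ G.map (F.map (G.map g))) := by
          rw [hQ, Category.id_comp]
        have a1 : G.map g ≫ adj.unit (G.obj Y) ≫ G.map (𝟙 (F.obj (G.obj Y)))
            = G.map (𝟙 X) ≫ (G.map g ≫ adj.unit (G.obj Y))
                ≫ G.map (𝟙 (F.obj (G.obj Y))) := by
          rw [← Category.assoc (G.map (𝟙 X)), ← Category.assoc (G.map (𝟙 X)),
            ← G.map_comp, Category.id_comp, Category.assoc]
        have a2 : G.map (𝟙 X) ≫ adj.unit (G.obj X) ≫ G.map (F.map (G.map g))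
            = G.map g ≫ adj.unit (G.obj Y) := by
          rw [← adj.unit_natural (G.map g), ← Category.assoc,
            ← G.map_comp, Category.id_comp]
        rw [e1, e2, a2, a1, hQid]
      · intro Y
        have c1 : Q Y (F.obj (G.obj Y)) (adj.unit (G.obj Y)) ≫ adj.counit Y
            = Q Y Y (G.map (𝟙 Y)) := by
          have := hQ Y Y (F.obj (G.obj Y)) Y (𝟙 Y) (adj.unit (G.obj Y)) (adj.counit Y)
          rw [Category.id_comp] at this
          rw [← this]
          congr 1
          rw [adj.right_triangle, ← G.map_comp, Category.id_comp]
        have c2 : adj.counit Y ≫ Q Y Y (G.map (𝟙 Y)) = adj.counit Y := by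
          rw [← adj.counit_natural (Q Y Y (G.map (𝟙 Y))), hQG,
            adj.counit_natural (𝟙 Y), Category.comp_id]
        rw [c1, c2]
    · rintro ⟨γ, hγ, hc⟩
      have hG := (part4 γ hγ).mp hc
      refine ⟨fun X Y k => γ X ≫ F.map k ≫ adj.counit Y, ?_, ?_⟩
      · intro X Y Z T h k l
        calc γ X ≫ F.map (G.map h ≫ k ≫ G.map l) ≫ adj.counit T
            = γ X ≫ (F.map (G.map h) ≫ F.map k ≫ F.map (G.map l)) ≫ adj.counit T := by
              rw [F.map_comp, F.map_comp]
          _ = (γ X ≫ F.map (G.map h)) ≫ F.map k ≫ (F.map (G.map l) ≫ adj.counit T) := by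
              simp only [Category.assoc]
          _ = (h ≫ γ Y) ≫ F.map k ≫ (adj.counit Z ≫ l) := by
              rw [← hγ h, adj.counit_natural l]
          _ = h ≫ (γ Y ≫ F.map k ≫ adj.counit Z) ≫ l := by
              simp only [Category.assoc]
      · intro X Y g
        have e1 : γ X ≫ F.map (G.map g) ≫ adj.counit Y
            = g ≫ γ Y ≫ adj.counit Y := by
          rw [← Category.assoc, ← hγ g, Category.assoc]
        show G.map (γ X ≫ F.map (G.map g) ≫ adj.counit Y) = G.map g
        rw [e1]
        calc G.map (g ≫ γ Y ≫ adj.counit Y)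
            = G.map g ≫ G.map (γ Y) ≫ G.map (adj.counit Y) := by
              rw [G.map_comp, G.map_comp]
          _ = G.map g ≫ G.map (𝟙 Y) := by rw [hG Y]
          _ = G.map g := by rw [← G.map_comp, Category.comp_id]
end
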